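/- arXiv:1206.0612 — 4 statements merged into one kernel-verified Lean document; each statement's English description precedes it below -/
import Mathlib

section
/- Let 𝒜 be a unital associative ℂ-algebra, let q ∈ ℂ with q ≠ 0, and let A, B ∈ 𝒜 satisfy A² = (q−q⁻¹)A + 1 and B² = (q−q⁻¹)B + 1. Suppose that for some fixed pairwise distinct α, β, γ ∈ ℂ one has A(α,β)·B(α,γ)·A(β,γ) = B(β,γ)·A(α,γ)·B(α,β), where X(α,β) := X + (q−q⁻¹)·β/(α−β) for X ∈ {A,B}. Then A·B·A = B·A·B. -/
/-- Auxiliary lemma: the braid relation follows from the Hecke relations and the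
"shifted" braid relation with abstract scalar shifts `x, y, z` satisfying the
compatibility identity `lam*y + y*z + x*y - x*z = 0`. -/
lemma baxterized_aux (𝒜 : Type*) [Ring 𝒜] [Algebra ℂ 𝒜] (lam x y z : ℂ) (A B : 𝒜)
    (hA' : A * A = lam • A + 1) (hB' : B * B = lam • B + 1)
    (hc : lam * y + y * z + x * y - x * z = 0)
    (h : (A + x • 1) * (B + y • 1) * (A + z • 1) = (B + z • 1) * (A + y • 1) * (B + x • 1)) :
    A * B * A = B * A * B := by
  have hc' : (lam * y + y * z + x * y - x * z) • (B - A) = (0 : 𝒜) := by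
    rw [hc, zero_smul]
  simp only [mul_add, add_mul, smul_mul_assoc, mul_smul_comm, mul_one, one_mul,
    smul_smul] at h
  rw [hA', hB'] at h
  linear_combination (norm := module) h + hc'

/-- If `A, B` satisfy the Hecke quadratic relation and the Baxterized
braid relation `A(α,β)·B(α,γ)·A(β,γ) = B(β,γ)·A(α,γ)·B(α,β)` holds for some fixed
pairwise distinct `α, β, γ ∈ ℂ` (with `X(α,β) := X + (q−q⁻¹)·β/(α−β)`),
then `A·B·A = B·A·B`. -/
theorem baxterized_implies_braid
    (𝒜 : Type*) [Ring 𝒜] [Algebra ℂ 𝒜] (q : ℂ) (hq : q ≠ 0) (A B : 𝒜)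
    (hA : A ^ 2 = (q - q⁻¹) • A + 1) (hB : B ^ 2 = (q - q⁻¹) • B + 1)
    (α β γ : ℂ) (hαβ : α ≠ β) (hβγ : β ≠ γ) (hαγ : α ≠ γ)
    (h : (A + algebraMap ℂ 𝒜 ((q - q⁻¹) * β / (α - β))) *
          (B + algebraMap ℂ 𝒜 ((q - q⁻¹) * γ / (α - γ))) *
          (A + algebraMap ℂ 𝒜 ((q - q⁻¹) * γ / (β - γ))) =
        (B + algebraMap ℂ 𝒜 ((q - q⁻¹) * γ / (β - γ))) *
          (A + algebraMap ℂ 𝒜 ((q - q⁻¹) * γ / (α - γ))) *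
          (B + algebraMap ℂ 𝒜 ((q - q⁻¹) * β / (α - β)))) :
    A * B * A = B * A * B := by
  have hab : α - β ≠ 0 := sub_ne_zero.2 hαβ
  have hbc : β - γ ≠ 0 := sub_ne_zero.2 hβγ
  have hac : α - γ ≠ 0 := sub_ne_zero.2 hαγ
  have hc : ∀ lam : ℂ, lam * (lam * γ / (α - γ)) +
      (lam * γ / (α - γ)) * (lam * γ / (β - γ)) +
      (lam * β / (α - β)) * (lam * γ / (α - γ)) -
      (lam * β / (α - β)) * (lam * γ / (β - γ)) = 0 := by
    intro lam
    field_simp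
    ring
  exact baxterized_aux 𝒜 (q - q⁻¹) ((q - q⁻¹) * β / (α - β)) ((q - q⁻¹) * γ / (α - γ))
    ((q - q⁻¹) * γ / (β - γ)) A B (by rw [← sq]; exact hA) (by rw [← sq]; exact hB) (hc (q - q⁻¹))
    (by simpa only [Algebra.algebraMap_eq_smul_one] using h)
end

section
/- Let ρ be a C-representation of H(m,1,n) on a finite-dimensional ℂ-vector space V, with parameters satisfying the restrictions, and let e ∈ V be a nonzero vector with ρ(J_k)e = a_k·e for all k = 1, …, n. If for some i ∈ {1,…,n−1} one has a_{i+1} ≠ q²·a_i and a_{i+1} ≠ q⁻²·a_i, then the vector e' := ρ(σ_i)e − ((q−q⁻¹)·a_{i+1}/(a_{i+1}−a_i))·e is nonzero and satisfies ρ(J_i)e' = a_{i+1}·e', ρ(J_{i+1})e' = a_i·e', and ρ(J_k)e' = a_k·e' for all k ≠ i, i+1. -/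
open Classical

noncomputable section

namespace CHA

abbrev Gen (n : ℕ) := Unit ⊕ Fin (n - 1)
def fτ (n : ℕ) : FreeAlgebra ℂ (Gen n) := FreeAlgebra.ι ℂ (Sum.inl ())
def fσ (n : ℕ) (i : Fin (n - 1)) : FreeAlgebra ℂ (Gen n) := FreeAlgebra.ι ℂ (Sum.inr i)
inductive Rel (m n : ℕ) (q : ℂ) (v : Fin m → ℂ) :
    FreeAlgebra ℂ (Gen n) → FreeAlgebra ℂ (Gen n) → Prop
  | braid (i j : Fin (n - 1)) (hij : (i : ℕ) + 1 = (j : ℕ)) :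
      Rel m n q v (fσ n i * fσ n j * fσ n i) (fσ n j * fσ n i * fσ n j)
  | comm (i j : Fin (n - 1)) (hij : (i : ℕ) + 1 < (j : ℕ)) :
      Rel m n q v (fσ n i * fσ n j) (fσ n j * fσ n i)
  | quad (i : Fin (n - 1)) :
      Rel m n q v (fσ n i * fσ n i) ((q - q⁻¹) • fσ n i + 1)
  | reflection (i : Fin (n - 1)) (hi : (i : ℕ) = 0) :
      Rel m n q v (fτ n * fσ n i * (fτ n * fσ n i)) (fσ n i * fτ n * (fσ n i * fτ n))
  | taucomm (i : Fin (n - 1)) (hi : 0 < (i : ℕ)) :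
      Rel m n q v (fτ n * fσ n i) (fσ n i * fτ n)
  | cyclotomic :
      Rel m n q v ((List.ofFn fun k : Fin m =>
        fτ n - algebraMap ℂ (FreeAlgebra ℂ (Gen n)) (v k)).prod) 0
abbrev Hecke (m n : ℕ) (q : ℂ) (v : Fin m → ℂ) := RingQuot (Rel m n q v)
def τgen (m n : ℕ) (q : ℂ) (v : Fin m → ℂ) : Hecke m n q v :=
  RingQuot.mkAlgHom ℂ (Rel m n q v) (fτ n)
def σgen (m n : ℕ) (q : ℂ) (v : Fin m → ℂ) (i : Fin (n - 1)) : Hecke m n q v :=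
  RingQuot.mkAlgHom ℂ (Rel m n q v) (fσ n i)
def σN (m n : ℕ) (q : ℂ) (v : Fin m → ℂ) (k : ℕ) : Hecke m n q v :=
  if h : k < n - 1 then σgen m n q v ⟨k, h⟩ else 1
def JMn (m n : ℕ) (q : ℂ) (v : Fin m → ℂ) : ℕ → Hecke m n q v
  | 0 => τgen m n q v
  | k + 1 => σN m n q v k * JMn m n q v k * σN m n q v k
def JM (m n : ℕ) (q : ℂ) (v : Fin m → ℂ) (i : Fin n) : Hecke m n q v :=
  JMn m n q v i.val
def Restrictions (m n : ℕ) (q : ℂ) (v : Fin m → ℂ) : Prop :=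
  (∀ N : ℕ, 1 ≤ N → N < n → (∑ j ∈ Finset.range (N + 1), q ^ (2 * j)) ≠ 0) ∧
  (∀ j k : Fin m, j ≠ k → ∀ i : ℤ, -(n : ℤ) < i → i < (n : ℤ) → q ^ (2 * i) * v j ≠ v k) ∧
  (∀ j, v j ≠ 0)

section Rep

variable {m n : ℕ} {q : ℂ} {v : Fin m → ℂ}
variable {V : Type*} [AddCommGroup V] [Module ℂ V]

/-- A linear operator is diagonalizable iff its eigenspaces span. -/
def Diagonalizable (f : Module.End ℂ V) : Prop := (⨆ c : ℂ, f.eigenspace c) = ⊤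

/-- A subspace is invariant under a set of operators. -/
def InvariantUnder (S : Set (Module.End ℂ V)) (p : Submodule ℂ V) : Prop :=
  ∀ T ∈ S, ∀ x ∈ p, T x ∈ p

/-- `V` is completely reducible under the (sub)algebra generated by the operators in `S`:
every `S`-invariant subspace has an `S`-invariant complement. -/
def CompletelyReducible (S : Set (Module.End ℂ V)) : Prop :=
  ∀ p : Submodule ℂ V, InvariantUnder S p → ∃ p', InvariantUnder S p' ∧ IsCompl p p'

/-- A `C`-representation of `H(m,1,n)`: all Jucys–Murphy operators are diagonalizable and,
for each `i = 1,…,n−1`, the action of the subalgebra generated by `J_i`, `J_{i+1}`, `σ_i`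
is completely reducible. -/
def IsCRep (ρ : Hecke m n q v →ₐ[ℂ] Module.End ℂ V) : Prop :=
  (∀ i : Fin n, Diagonalizable (ρ (JM m n q v i))) ∧
  ∀ i : Fin (n - 1),
    CompletelyReducible
      {ρ (JM m n q v ⟨i.val, by have := i.isLt; omega⟩),
       ρ (JM m n q v ⟨i.val + 1, by have := i.isLt; omega⟩),
       ρ (σgen m n q v i)}

end Rep


section Aux

variable {m n : ℕ} {q : ℂ} {v : Fin m → ℂ}
variable {V : Type*} [AddCommGroup V] [Module ℂ V]

lemma diag_sq (f : Module.End ℂ V) (hf : Diagonalizable f) (μ : ℂ) (x : V)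
    (h : f (f x - μ • x) = μ • (f x - μ • x)) : f x = μ • x := by
  classical
  have hx : x ∈ ⨆ c : ℂ, f.eigenspace c := hf ▸ Submodule.mem_top
  obtain ⟨d, hd⟩ := (Submodule.mem_iSup_iff_exists_dfinsupp _ x).mp hx
  set L : (Π₀ c : ℂ, ↥(f.eigenspace c)) →ₗ[ℂ] V :=
    DFinsupp.lsum ℕ (M := fun c : ℂ ↦ ↥(f.eigenspace c)) (fun c => (f.eigenspace c).subtype)
    with hL
  set D : (Π₀ c : ℂ, ↥(f.eigenspace c)) →ₗ[ℂ] (Π₀ c : ℂ, ↥(f.eigenspace c)) :=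
    DFinsupp.mapRange.linearMap
      (fun c : ℂ => ((c - μ) • LinearMap.id : f.eigenspace c →ₗ[ℂ] f.eigenspace c)) with hD
  have hinj : Function.Injective L :=
    (iSupIndep_iff_dfinsupp_lsum_injective _).mp f.eigenspaces_iSupIndep
  have key : ∀ w : Π₀ c : ℂ, ↥(f.eigenspace c), f (L w) - μ • (L w) = L (D w) := by
    intro w
    have : (f - μ • 1) ∘ₗ L = L ∘ₗ D := by
      apply DFinsupp.lhom_ext'
      intro c
      apply LinearMap.ext
      intro y
      have hy : f (y : V) = c • (y : V) := Module.End.mem_eigenspace_iff.mp y.2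
      simp only [LinearMap.comp_apply, DFinsupp.lsingle_apply, hL, hD,
        DFinsupp.mapRange.linearMap_apply, DFinsupp.mapRange_single, LinearMap.smul_apply,
        LinearMap.id_apply, ← DFinsupp.single_smul, DFinsupp.lsum_single, LinearMap.sub_apply,
        Submodule.coe_subtype, LinearMap.smul_apply, Module.End.one_apply, SetLike.val_smul, hy,
        sub_smul]
      simp
    have := congrArg (fun g => g w) this
    simpa using this
  have h2 : L (D (D d)) = 0 := by
    rw [← key, ← key, hd, h, sub_self]
  have hDDd : D (D d) = 0 := hinj (by rw [h2, map_zero])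
  have hDc : ∀ (w : Π₀ c : ℂ, ↥(f.eigenspace c)) (c' : ℂ), (D w) c' = (c' - μ) • (w c') := by
    intro w c'
    simp [hD]
  have hDd : D d = 0 := by
    ext c'
    have h0 : (c' - μ) • ((c' - μ) • d c') = 0 := by
      have := congrArg (fun w : Π₀ c : ℂ, ↥(f.eigenspace c) => w c') hDDd
      simpa [hDc] using this
    rcases eq_or_ne c' μ with hcm | hcm
    · simp [hDc, hcm]
    · have hz : (c' - μ) • d c' = 0 := by
        rcases smul_eq_zero.mp h0 with hcase | hcase
        · exact absurd (sub_eq_zero.mp hcase) hcm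
        · exact hcase
      simp [hDc, hz]
  have hfin := key d
  rw [hd, hDd, map_zero] at hfin
  exact sub_eq_zero.mp hfin



lemma hecke_quad (i : Fin (n - 1)) :
    σgen m n q v i * σgen m n q v i = (q - q⁻¹) • σgen m n q v i + 1 := by
  have h := RingQuot.mkAlgHom_rel ℂ (Rel.quad (m := m) (n := n) (q := q) (v := v) i)
  simpa only [map_mul, map_add, map_smul, map_one, σgen] using h

lemma hecke_braid (i j : Fin (n - 1)) (hij : (i : ℕ) + 1 = (j : ℕ)) :
    σgen m n q v i * σgen m n q v j * σgen m n q v i =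
      σgen m n q v j * σgen m n q v i * σgen m n q v j := by
  have h := RingQuot.mkAlgHom_rel ℂ (Rel.braid (m := m) (n := n) (q := q) (v := v) i j hij)
  simpa only [map_mul, σgen] using h

lemma hecke_comm (i j : Fin (n - 1)) (hij : (i : ℕ) + 1 < (j : ℕ)) :
    σgen m n q v i * σgen m n q v j = σgen m n q v j * σgen m n q v i := by
  have h := RingQuot.mkAlgHom_rel ℂ (Rel.comm (m := m) (n := n) (q := q) (v := v) i j hij)
  simpa only [map_mul, σgen] using h

lemma hecke_taucomm (i : Fin (n - 1)) (hi : 0 < (i : ℕ)) :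
    τgen m n q v * σgen m n q v i = σgen m n q v i * τgen m n q v := by
  have h := RingQuot.mkAlgHom_rel ℂ (Rel.taucomm (m := m) (n := n) (q := q) (v := v) i hi)
  simpa only [map_mul, σgen, τgen] using h

lemma σN_comm (j k : ℕ) (h : j + 1 < k) :
    σN m n q v j * σN m n q v k = σN m n q v k * σN m n q v j := by
  unfold σN
  split_ifs with h1 h2 h2
  · exact hecke_comm ⟨j, h1⟩ ⟨k, h2⟩ h
  · simp
  · simp
  · simp

lemma τ_σN (k : ℕ) (hk : 1 ≤ k) :
    τgen m n q v * σN m n q v k = σN m n q v k * τgen m n q v := by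
  unfold σN
  split_ifs with h1
  · exact hecke_taucomm ⟨k, h1⟩ hk
  · simp

lemma σN_braid (k : ℕ) (hk : k + 1 < n - 1) :
    σN m n q v k * σN m n q v (k + 1) * σN m n q v k =
      σN m n q v (k + 1) * σN m n q v k * σN m n q v (k + 1) := by
  unfold σN
  rw [dif_pos hk, dif_pos (show k < n - 1 by omega)]
  exact hecke_braid ⟨k, by omega⟩ ⟨k + 1, hk⟩ rfl

lemma mul_comm3 {R : Type*} [Monoid R] {x a b : R} (h1 : x * a = a * x)
    (h2 : x * b = b * x) : x * (a * b) = (a * b) * x := by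
  rw [← mul_assoc, h1, mul_assoc, h2, ← mul_assoc]

lemma σN_comm_JMn_small (j : ℕ) : ∀ k, k + 1 ≤ j →
    σN m n q v j * JMn m n q v k = JMn m n q v k * σN m n q v j := by
  intro k
  induction k with
  | zero => intro hj; exact (τ_σN j hj).symm
  | succ k ih =>
    intro hj
    show σN m n q v j * (σN m n q v k * JMn m n q v k * σN m n q v k) = _
    have h1 : σN m n q v j * σN m n q v k = σN m n q v k * σN m n q v j :=
      (σN_comm k j (by omega)).symm
    exact mul_comm3 (mul_comm3 h1 (ih (by omega))) h1

lemma σN_comm_JMn_big (j : ℕ) : ∀ k, j + 2 ≤ k → k ≤ n - 1 →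
    σN m n q v j * JMn m n q v k = JMn m n q v k * σN m n q v j := by
  intro k
  induction k with
  | zero => intro h1 h2; omega
  | succ k ih =>
    intro h1 h2
    rcases eq_or_lt_of_le h1 with heq | hlt
    · -- k = j + 1
      have hk : k = j + 1 := by omega
      subst hk
      set s := σN m n q v j with hs
      set t := σN m n q v (j + 1) with ht
      set J := JMn m n q v j with hJ
      have hb : s * t * s = t * s * t := σN_braid j (by omega)
      have hA : t * J = J * t := σN_comm_JMn_small (j + 1) j (by omega)
      show s * (t * (s * J * s) * t) = (t * (s * J * s) * t) * s
      simp only [← mul_assoc]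
      rw [hb, mul_assoc (t * s) t J, hA, ← mul_assoc, mul_assoc (t * s * J) t s,
        mul_assoc (t * s * J) (t * s) t, ← hb]
      simp only [← mul_assoc]
    · show σN m n q v j * (σN m n q v k * JMn m n q v k * σN m n q v k) = _
      have h1' : σN m n q v j * σN m n q v k = σN m n q v k * σN m n q v j :=
        σN_comm j k (by omega)
      exact mul_comm3 (mul_comm3 h1' (ih (by omega) (by omega))) h1'

lemma smul_left_cancel_of_ne_zero {x : V} (hx : x ≠ 0) {s t : ℂ} (h : s • x = t • x) :
    s = t := by
  by_contra hne
  have h0 : (s - t) • x = 0 := by rw [sub_smul, h, sub_self]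
  rcases smul_eq_zero.mp h0 with h' | h'
  · exact hne (sub_eq_zero.mp h')
  · exact hx h'

lemma main_aux (q a₁ a₂ : ℂ) (hq : q ≠ 0)
    (S Ji Ji1 : Module.End ℂ V)
    (hquad : ∀ x : V, S (S x) = (q - q⁻¹) • S x + x)
    (hJJ : ∀ x : V, Ji1 x = S (Ji (S x)))
    (hdiag : Diagonalizable Ji)
    (e : V) (he : e ≠ 0)
    (h1e : Ji e = a₁ • e) (h2e : Ji1 e = a₂ • e)
    (h1 : a₂ ≠ q ^ 2 * a₁) (h2 : a₂ ≠ (q ^ 2)⁻¹ * a₁) :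
    S e - ((q - q⁻¹) * a₂ / (a₂ - a₁)) • e ≠ 0 ∧
    Ji (S e - ((q - q⁻¹) * a₂ / (a₂ - a₁)) • e) =
      a₂ • (S e - ((q - q⁻¹) * a₂ / (a₂ - a₁)) • e) ∧
    Ji1 (S e - ((q - q⁻¹) * a₂ / (a₂ - a₁)) • e) =
      a₁ • (S e - ((q - q⁻¹) * a₂ / (a₂ - a₁)) • e) := by
  have hqi : q * q⁻¹ = 1 := mul_inv_cancel₀ hq
  have hA : S (Ji (S e)) = a₂ • e := by rw [← hJJ e]; exact h2e
  have hB := hquad (Ji (S e))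
  rw [hA, map_smul] at hB
  -- hB : a₂ • S e = (q - q⁻¹) • a₂ • e + Ji (S e)
  have hS1 : Ji (S e) = a₂ • S e - ((q - q⁻¹) * a₂) • e := by
    calc Ji (S e) = ((q - q⁻¹) • a₂ • e + Ji (S e)) - (q - q⁻¹) • a₂ • e := by abel
      _ = a₂ • S e - ((q - q⁻¹) * a₂) • e := by rw [← hB, smul_smul]
  have hS2 : Ji1 (S e) = a₁ • S e + ((q - q⁻¹) * a₂) • e := by
    rw [hJJ (S e), hquad e, map_add, map_smul, map_add, map_smul, hA, h1e, map_smul,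
      smul_smul]
    abel
  have hne : a₁ ≠ a₂ := by
    intro haa
    have hdiff : Ji (S e) - a₁ • S e = (-((q - q⁻¹) * a₂)) • e := by
      rw [hS1, haa]; module
    have hJe : Ji (S e) = a₁ • S e := by
      apply diag_sq Ji hdiag
      rw [hdiff, map_smul, h1e]
      module
    have h0 : (-((q - q⁻¹) * a₂)) • e = 0 := by rw [← hdiff, hJe, sub_self]
    have hz : (q - q⁻¹) * a₂ = 0 := by
      rcases smul_eq_zero.mp h0 with h' | h'
      · exact neg_eq_zero.mp h'
      · exact absurd h' he
    rcases mul_eq_zero.mp hz with hδ | ha2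
    · have hq1 : q ^ 2 = 1 := by
        have hqq : q = q⁻¹ := sub_eq_zero.mp hδ
        calc q ^ 2 = q * q := sq q
          _ = q * q⁻¹ := by rw [← hqq]
          _ = 1 := hqi
      exact h1 (by rw [hq1, one_mul, haa])
    · refine h1 ?_
      rw [haa, ha2]
      ring
  have hden : a₂ - a₁ ≠ 0 := sub_ne_zero.mpr (Ne.symm hne)
  set c : ℂ := (q - q⁻¹) * a₂ / (a₂ - a₁) with hcdef
  have hc : c * (a₂ - a₁) = (q - q⁻¹) * a₂ := div_mul_cancel₀ _ hden
  have hnz : S e - c • e ≠ 0 := by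
    intro hz0
    have hSe : S e = c • e := sub_eq_zero.mp hz0
    have hcc : c * c = (q - q⁻¹) * c + 1 := by
      apply smul_left_cancel_of_ne_zero he
      have hqe := hquad e
      rw [hSe, map_smul, hSe] at hqe
      calc (c * c) • e = c • c • e := (smul_smul c c e).symm
        _ = (q - q⁻¹) • c • e + e := hqe
        _ = ((q - q⁻¹) * c + 1) • e := by module
    have hca : c * c * a₁ = a₂ := by
      apply smul_left_cancel_of_ne_zero he
      have h' := hA
      rw [hSe, map_smul, h1e, map_smul, map_smul, hSe] at h'
      calc (c * c * a₁) • e = c • a₁ • c • e := by module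
        _ = a₂ • e := h'
    have hkey : (a₂ - q ^ 2 * a₁) * (a₂ - (q ^ 2)⁻¹ * a₁) = 0 := by
      have hqi2 : (q ^ 2)⁻¹ = q⁻¹ ^ 2 := by rw [inv_pow]
      rw [hqi2]
      linear_combination ((a₂ - a₁) * a₁) * hcc - (a₂ - a₁) * hca + ((q - q⁻¹) * a₁) * hc +
        (a₁ ^ 2 * (q * q⁻¹ + 1) - 2 * a₁ * a₂) * hqi
    rcases mul_eq_zero.mp hkey with h' | h'
    · exact h1 (sub_eq_zero.mp h')
    · exact h2 (sub_eq_zero.mp h')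
  have hinv : (a₂ - a₁)⁻¹ * (a₂ - a₁) = 1 := inv_mul_cancel₀ hden
  have hE1 : Ji (S e - c • e) = a₂ • (S e - c • e) := by
    rw [map_sub, map_smul, hS1, h1e]
    match_scalars
    · ring
    · linear_combination ((q - q⁻¹) * a₂) * hinv
  have hE2 : Ji1 (S e - c • e) = a₁ • (S e - c • e) := by
    rw [map_sub, map_smul, hS2, h2e]
    match_scalars
    · ring
    · linear_combination (-(q - q⁻¹) * a₂) * hinv
  exact ⟨hnz, hE1, hE2⟩


end Aux


/-- Proposition 3.1(c).  In a `C`-representation of `H(m,1,n)`,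
with parameters satisfying the restrictions, if `a_{i+1} ≠ q^{±2}·a_i` on a common
eigenvector `e`, then `e' := σ_i e − ((q−q⁻¹)a_{i+1}/(a_{i+1}−a_i))·e` is nonzero and
is a common eigenvector with the string obtained by exchanging `a_i` and `a_{i+1}`. -/
theorem intertwined_JM_eigenvector
    (m n : ℕ) (hm : 1 ≤ m) (hn : 1 ≤ n) (q : ℂ) (hq : q ≠ 0) (v : Fin m → ℂ)
    (hres : Restrictions m n q v)
    (V : Type*) [AddCommGroup V] [Module ℂ V] [FiniteDimensional ℂ V]
    (ρ : Hecke m n q v →ₐ[ℂ] Module.End ℂ V) (hρ : IsCRep ρ)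
    (e : V) (he : e ≠ 0) (a : Fin n → ℂ)
    (hev : ∀ k : Fin n, ρ (JM m n q v k) e = a k • e) :
    ∀ i : Fin (n - 1),
      a ⟨i.val + 1, by have := i.isLt; omega⟩ ≠
          q ^ 2 * a ⟨i.val, by have := i.isLt; omega⟩ →
      a ⟨i.val + 1, by have := i.isLt; omega⟩ ≠
          (q ^ 2)⁻¹ * a ⟨i.val, by have := i.isLt; omega⟩ →
      (ρ (σgen m n q v i) e -
          ((q - q⁻¹) * a ⟨i.val + 1, by have := i.isLt; omega⟩ /
              (a ⟨i.val + 1, by have := i.isLt; omega⟩ -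
                a ⟨i.val, by have := i.isLt; omega⟩)) • e) ≠ 0 ∧
      ρ (JM m n q v ⟨i.val, by have := i.isLt; omega⟩)
          (ρ (σgen m n q v i) e -
            ((q - q⁻¹) * a ⟨i.val + 1, by have := i.isLt; omega⟩ /
                (a ⟨i.val + 1, by have := i.isLt; omega⟩ -
                  a ⟨i.val, by have := i.isLt; omega⟩)) • e) =
        a ⟨i.val + 1, by have := i.isLt; omega⟩ •
          (ρ (σgen m n q v i) e -
            ((q - q⁻¹) * a ⟨i.val + 1, by have := i.isLt; omega⟩ /
                (a ⟨i.val + 1, by have := i.isLt; omega⟩ -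
                  a ⟨i.val, by have := i.isLt; omega⟩)) • e) ∧
      ρ (JM m n q v ⟨i.val + 1, by have := i.isLt; omega⟩)
          (ρ (σgen m n q v i) e -
            ((q - q⁻¹) * a ⟨i.val + 1, by have := i.isLt; omega⟩ /
                (a ⟨i.val + 1, by have := i.isLt; omega⟩ -
                  a ⟨i.val, by have := i.isLt; omega⟩)) • e) =
        a ⟨i.val, by have := i.isLt; omega⟩ •
          (ρ (σgen m n q v i) e -
            ((q - q⁻¹) * a ⟨i.val + 1, by have := i.isLt; omega⟩ /
                (a ⟨i.val + 1, by have := i.isLt; omega⟩ -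
                  a ⟨i.val, by have := i.isLt; omega⟩)) • e) ∧
      ∀ k : Fin n, (k : ℕ) ≠ i.val → (k : ℕ) ≠ i.val + 1 →
        ρ (JM m n q v k)
            (ρ (σgen m n q v i) e -
              ((q - q⁻¹) * a ⟨i.val + 1, by have := i.isLt; omega⟩ /
                  (a ⟨i.val + 1, by have := i.isLt; omega⟩ -
                    a ⟨i.val, by have := i.isLt; omega⟩)) • e) =
          a k •
            (ρ (σgen m n q v i) e -
              ((q - q⁻¹) * a ⟨i.val + 1, by have := i.isLt; omega⟩ /
                  (a ⟨i.val + 1, by have := i.isLt; omega⟩ -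
                    a ⟨i.val, by have := i.isLt; omega⟩)) • e) := by
  intro i h1 h2
  have hlt : i.val + 1 < n := by have := i.isLt; omega
  have hlt' : i.val < n := by have := i.isLt; omega
  set S : Module.End ℂ V := ρ (σgen m n q v i) with hSdef
  have hσN : σN m n q v i.val = σgen m n q v i := by
    unfold σN
    rw [dif_pos i.isLt]
  have hquadE : S * S = (q - q⁻¹) • S + 1 := by
    have h := congrArg ρ (hecke_quad (m := m) (n := n) (q := q) (v := v) i)
    rw [map_mul, map_add, map_smul, map_one] at h
    exact h
  have hquad : ∀ x : V, S (S x) = (q - q⁻¹) • S x + x := by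
    intro x
    have h := LinearMap.ext_iff.mp hquadE x
    simpa [Module.End.mul_apply, LinearMap.add_apply, LinearMap.smul_apply,
      Module.End.one_apply] using h
  have hJM1 : JM m n q v ⟨i.val + 1, hlt⟩ =
      σgen m n q v i * JM m n q v ⟨i.val, hlt'⟩ * σgen m n q v i := by
    show σN m n q v i.val * JMn m n q v i.val * σN m n q v i.val = _
    rw [hσN]
    rfl
  have hJJ : ∀ x : V, ρ (JM m n q v ⟨i.val + 1, hlt⟩) x =
      S (ρ (JM m n q v ⟨i.val, hlt'⟩) (S x)) := by
    intro x
    have h := congrArg ρ hJM1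
    rw [map_mul, map_mul] at h
    rw [h]
    rfl
  obtain ⟨g0, g1, g2⟩ := main_aux q (a ⟨i.val, hlt'⟩) (a ⟨i.val + 1, hlt⟩) hq
    S (ρ (JM m n q v ⟨i.val, hlt'⟩)) (ρ (JM m n q v ⟨i.val + 1, hlt⟩))
    hquad hJJ (hρ.1 ⟨i.val, hlt'⟩) e he (hev ⟨i.val, hlt'⟩) (hev ⟨i.val + 1, hlt⟩) h1 h2
  refine ⟨g0, g1, g2, ?_⟩
  intro k hk1 hk2
  have hkn : k.val ≤ n - 1 := by have := k.isLt; omega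
  have hcommH : σgen m n q v i * JM m n q v k = JM m n q v k * σgen m n q v i := by
    rcases Nat.lt_or_ge k.val i.val with hlt2 | hge
    · have h := σN_comm_JMn_small (m := m) (n := n) (q := q) (v := v) i.val k.val (by omega)
      rw [hσN] at h
      exact h
    · have hge2 : i.val + 2 ≤ k.val := by omega
      have h := σN_comm_JMn_big (m := m) (n := n) (q := q) (v := v) i.val k.val hge2 hkn
      rw [hσN] at h
      exact h
  have hcommE : ρ (JM m n q v k) (S e) = a k • S e := by
    have h := congrArg ρ hcommH
    rw [map_mul, map_mul] at h
    have h' := LinearMap.ext_iff.mp h e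
    rw [Module.End.mul_apply, Module.End.mul_apply, hev k, map_smul] at h'
    exact h'.symm
  rw [map_sub, map_smul, hcommE, hev k]
  module

end CHA
end
end

section
/- Let λ be an m-partition of n satisfying: (i) λ is not of the form (∅, …, ∅, μ, ∅, …, ∅) with exactly one nonempty component μ where |μ| ≤ 2, or μ = (2,1), or μ = (2,1,1), or μ = (3,1); and (ii) λ is not of the form having exactly two nonempty components, each consisting of a single box. Let λ¹, …, λˡ be m-partitions of n (with l ≥ 1), each different from λ. Then the set { λ∖{α} : α a removable m-node of λ } is not equal to the set { λʲ∖{β} : 1 ≤ j ≤ l, β a removable m-node of λʲ } (as sets of m-partitions of n−1). -/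
open Classical

noncomputable section

namespace CHA

/-- An `m`-node: a component index `k : Fin m` together with a (0-based) cell
`(row, column)` of a Young diagram. -/
abbrev MNode (m : ℕ) := Fin m × ℕ × ℕ

/-- `pos : Fin n → MNode m` describes a standard `m`-tableau of shape
`μ : Fin m → YoungDiagram` when: every value is a cell of the corresponding diagram;
`pos` is injective; and entries increase (left to right) along rows and down columns,
i.e. if `pos j` is in the same component and row (resp. column) as `pos i` and strictly
to the right (resp. below), then `i < j`.  Here `pos i` is the `m`-node containing the
entry `i+1` (1-based). -/
def IsStdTabFun (m n : ℕ) (μ : Fin m → YoungDiagram) (pos : Fin n → MNode m) : Prop :=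
  (∀ i, ((pos i).2.1, (pos i).2.2) ∈ μ (pos i).1) ∧
  Function.Injective pos ∧
  (∀ i j : Fin n, (pos i).1 = (pos j).1 → (pos i).2.1 = (pos j).2.1 →
      (pos i).2.2 < (pos j).2.2 → i < j) ∧
  (∀ i j : Fin n, (pos i).1 = (pos j).1 → (pos i).2.2 = (pos j).2.2 →
      (pos i).2.1 < (pos j).2.1 → i < j)

/-- The type of standard `m`-tableaux of shape `μ` with entries `1, …, n`. -/
def StdTab (m n : ℕ) (μ : Fin m → YoungDiagram) :=
  { pos : Fin n → MNode m // IsStdTabFun m n μ pos }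

/-- The content `c(X|i) = v_k q^{2(s−r)}` of the entry `i` of a standard `m`-tableau,
where `i` sits in row `r`, column `s` of the `k`-th diagram. -/
def content {m n : ℕ} (q : ℂ) (v : Fin m → ℂ) {μ : Fin m → YoungDiagram}
    (X : StdTab m n μ) (i : Fin n) : ℂ :=
  v (X.val i).1 * q ^ (2 * (((X.val i).2.2 : ℤ) - ((X.val i).2.1 : ℤ)))

/-- The `m`-node `α = (k, r, c)` is a removable node of the `m`-partition `μ`. -/
def IsRemovable {m : ℕ} (μ : Fin m → YoungDiagram) (α : MNode m) : Prop :=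
  (α.2.1, α.2.2) ∈ μ α.1 ∧ (α.2.1 + 1, α.2.2) ∉ μ α.1 ∧ (α.2.1, α.2.2 + 1) ∉ μ α.1

/-- `ν = μ ∖ {α}`: the `m`-partition obtained from `μ` by removing the `m`-node `α`. -/
def RemovedShape {m : ℕ} (μ ν : Fin m → YoungDiagram) (α : MNode m) : Prop :=
  (ν α.1).cells = (μ α.1).cells.erase (α.2.1, α.2.2) ∧ ∀ k, k ≠ α.1 → ν k = μ k

/-! ### Auxiliary lemmas -/

section Aux

lemma rowLen_eq_of {μ : YoungDiagram} {i L : ℕ} (h : ∀ j, (i, j) ∈ μ ↔ j < L) :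
    μ.rowLen i = L := by
  rcases Nat.lt_trichotomy (μ.rowLen i) L with hlt | he | hgt
  · have h2 := (h (μ.rowLen i)).2 hlt
    rw [YoungDiagram.mem_iff_lt_rowLen] at h2; omega
  · exact he
  · have h2 := (h L).1 (YoungDiagram.mem_iff_lt_rowLen.2 hgt); omega

lemma eq_of_rowLen_eq {μ ν : YoungDiagram} (h : ∀ i, μ.rowLen i = ν.rowLen i) : μ = ν := by
  apply YoungDiagram.ext
  ext ⟨i, j⟩
  simp only [YoungDiagram.mem_cells]
  rw [YoungDiagram.mem_iff_lt_rowLen, YoungDiagram.mem_iff_lt_rowLen, h i]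

lemma exists_rowLen_zero (μ : YoungDiagram) : ∃ N, ∀ i, N ≤ i → μ.rowLen i = 0 := by
  refine ⟨(μ.cells.sup Prod.fst) + 1, fun i hi => ?_⟩
  apply rowLen_eq_of
  intro j
  constructor
  · intro hmem
    exfalso
    have hle : i ≤ μ.cells.sup Prod.fst :=
      Finset.le_sup (f := Prod.fst) ((YoungDiagram.mem_cells ((i, j) : ℕ × ℕ)).2 hmem)
    omega
  · intro hj; exact absurd hj (Nat.not_lt_zero _)

lemma const_of_no_descent {μ : YoungDiagram} {a : ℕ} :
    ∀ b, a ≤ b → (∀ r, a ≤ r → r < b → ¬ μ.rowLen (r+1) < μ.rowLen r) →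
      μ.rowLen b = μ.rowLen a := by
  intro b
  induction b with
  | zero => intro h _; rw [Nat.le_zero.mp h]
  | succ b ih =>
    intro hab h
    rcases Nat.eq_or_lt_of_le hab with he | hlt
    · rw [he]
    · have hb : a ≤ b := by omega
      have hconst := ih hb (fun r hr hrb => h r hr (by omega))
      have hnd := h b hb (by omega)
      have hanti := μ.rowLen_anti b (b+1) (by omega)
      omega

lemma zero_of_no_descent_ge {μ : YoungDiagram} {a : ℕ}
    (h : ∀ r, a ≤ r → ¬ μ.rowLen (r+1) < μ.rowLen r) : μ.rowLen a = 0 := by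
  obtain ⟨N, hN⟩ := exists_rowLen_zero μ
  have h1 : μ.rowLen (max a N) = μ.rowLen a :=
    const_of_no_descent (max a N) (le_max_left _ _) (fun r hr _ => h r hr)
  rw [hN (max a N) (le_max_right _ _)] at h1
  omega

lemma exists_descent {μ : YoungDiagram} (h : 0 < μ.rowLen 0) :
    ∃ r, μ.rowLen (r+1) < μ.rowLen r := by
  by_contra hc
  push_neg at hc
  have h0 := zero_of_no_descent_ge (a := 0) (fun r _ => not_lt.2 (hc r))
  omega

lemma card_pos_iff' {μ : YoungDiagram} : 0 < μ.card ↔ 0 < μ.rowLen 0 := by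
  rw [← YoungDiagram.mem_iff_lt_rowLen]
  constructor
  · intro h
    obtain ⟨⟨i, j⟩, hij⟩ := Finset.card_pos.1 h
    exact μ.up_left_mem (Nat.zero_le _) (Nat.zero_le _)
      ((YoungDiagram.mem_cells ((i, j) : ℕ × ℕ)).1 hij)
  · intro h
    exact Finset.card_pos.2 ⟨(0, 0), (YoungDiagram.mem_cells ((0, 0) : ℕ × ℕ)).2 h⟩

lemma card_le_of_forall_mem {μ : YoungDiagram} {s : Finset (ℕ × ℕ)}
    (h : ∀ x ∈ μ, x ∈ s) : μ.card ≤ s.card :=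
  Finset.card_le_card fun x hx => h x hx

lemma isRemovable_iff {m : ℕ} {μ : Fin m → YoungDiagram} {α : MNode m} :
    IsRemovable μ α ↔
      (μ α.1).rowLen α.2.1 = α.2.2 + 1 ∧ (μ α.1).rowLen (α.2.1 + 1) ≤ α.2.2 := by
  unfold IsRemovable
  rw [YoungDiagram.mem_iff_lt_rowLen, YoungDiagram.mem_iff_lt_rowLen,
    YoungDiagram.mem_iff_lt_rowLen]
  constructor
  · rintro ⟨h1, h2, h3⟩; omega
  · rintro ⟨h1, h2⟩; omega

lemma isRemovable_of_descent {m : ℕ} {μ : Fin m → YoungDiagram} {k : Fin m} {r : ℕ}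
    (h : (μ k).rowLen (r+1) < (μ k).rowLen r) :
    IsRemovable μ (k, r, (μ k).rowLen r - 1) := by
  rw [isRemovable_iff]
  exact ⟨by simp; omega, by simp; omega⟩

lemma exists_removedShape {m : ℕ} {μ : Fin m → YoungDiagram} {α : MNode m}
    (h : IsRemovable μ α) : ∃ ν, RemovedShape μ ν α := by
  obtain ⟨k0, r, c⟩ := α
  obtain ⟨h1, h2, h3⟩ := h
  have h2' : ((r + 1 : ℕ), c) ∉ μ k0 := h2
  have h3' : ((r : ℕ), c + 1) ∉ μ k0 := h3
  refine ⟨Function.update μ k0 ⟨(μ k0).cells.erase (r, c), ?_⟩, ?_, ?_⟩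
  · rintro ⟨i2, j2⟩ ⟨i1, j1⟩ ⟨hi, hj⟩ hc
    simp only [Finset.coe_erase, Set.mem_diff, Finset.mem_coe, YoungDiagram.mem_cells,
      Set.mem_singleton_iff] at hc ⊢
    obtain ⟨hmem, hne⟩ := hc
    refine ⟨(μ k0).up_left_mem hi hj hmem, ?_⟩
    intro he
    rw [Prod.mk.injEq] at he
    obtain ⟨he1, he2⟩ := he
    subst he1; subst he2
    rcases Nat.lt_or_ge i1 i2 with h4 | h4
    · exact h2' ((μ k0).up_left_mem (by omega) hj hmem)
    · have hii : i1 = i2 := by omega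
      subst hii
      have hj2 : j1 ≠ j2 := by intro he; apply hne; rw [he]
      exact h3' ((μ k0).up_left_mem le_rfl (by omega) hmem)
  · show (Function.update μ k0 _ k0).cells = _
    rw [Function.update_self]
  · intro k hk
    exact Function.update_of_ne hk _ _

lemma removedShape_rowLen' {m : ℕ} {μ ν : Fin m → YoungDiagram} {k0 : Fin m} {r c : ℕ}
    (hrem : IsRemovable μ (k0, r, c)) (h : RemovedShape μ ν (k0, r, c)) :
    (∀ i, (ν k0).rowLen i = if i = r then c else (μ k0).rowLen i) ∧
      ∀ k, k ≠ k0 → ν k = μ k := by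
  obtain ⟨hL, hle⟩ := isRemovable_iff.mp hrem
  simp only at hL hle
  refine ⟨fun i => ?_, h.2⟩
  have hmem : ∀ p : ℕ × ℕ, p ∈ ν k0 ↔ (p ≠ (r, c) ∧ p ∈ μ k0) := by
    intro p
    rw [← YoungDiagram.mem_cells, h.1, Finset.mem_erase, YoungDiagram.mem_cells]
  by_cases hi : i = r
  · subst hi
    rw [if_pos rfl]
    apply rowLen_eq_of
    intro j
    rw [hmem (i, j), YoungDiagram.mem_iff_lt_rowLen, hL]
    simp only [ne_eq, Prod.mk.injEq, true_and]
    omega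
  · rw [if_neg hi]
    apply rowLen_eq_of
    intro j
    rw [hmem (i, j), YoungDiagram.mem_iff_lt_rowLen]
    simp only [ne_eq, Prod.mk.injEq]
    constructor
    · rintro ⟨_, h2⟩; exact h2
    · intro h2; exact ⟨fun hc' => hi hc'.1, h2⟩

/-- The set of `m`-nodes of an `m`-partition. -/
def CellsM {m : ℕ} (μ : Fin m → YoungDiagram) : Set (MNode m) :=
  {x | (x.2.1, x.2.2) ∈ μ x.1}

lemma cellsM_inj {m : ℕ} {μ ν : Fin m → YoungDiagram} (h : CellsM μ = CellsM ν) : μ = ν := by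
  funext k
  apply YoungDiagram.ext
  ext ⟨i, j⟩
  have h2 := Set.ext_iff.mp h (k, i, j)
  simpa only [CellsM, Set.mem_setOf_eq, YoungDiagram.mem_cells] using h2

lemma removedShape_cellsM {m : ℕ} {μ ν : Fin m → YoungDiagram} {α : MNode m}
    (h : RemovedShape μ ν α) : CellsM ν = CellsM μ \ {α} := by
  obtain ⟨k0, r, c⟩ := α
  ext ⟨k, i, j⟩
  simp only [CellsM, Set.mem_setOf_eq, Set.mem_diff, Set.mem_singleton_iff]
  by_cases hk : k = k0
  · subst hk
    rw [← YoungDiagram.mem_cells, h.1, Finset.mem_erase, YoungDiagram.mem_cells]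
    simp only [ne_eq, Prod.mk.injEq]
    tauto
  · have h2 := h.2 k hk
    rw [h2]
    simp only [Prod.mk.injEq]
    have : ¬ (k = k0 ∧ i = r ∧ j = c) := fun he => hk he.1
    tauto

lemma set_step {X : Type*} {M L : Set X} {b1 b2 a1 a2 : X}
    (hb1 : b1 ∈ M) (hb2 : b2 ∈ M) (ha1 : a1 ∈ L) (ha2 : a2 ∈ L)
    (h1 : M \ {b1} = L \ {a1}) (h2 : M \ {b2} = L \ {a2}) (hb : b1 ≠ b2) : M = L := by
  by_cases e1 : b1 = a1
  · subst e1
    ext x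
    by_cases hx : x = b1
    · subst hx; exact ⟨fun _ => ha1, fun _ => hb1⟩
    · have h3 := Set.ext_iff.mp h1 x
      simp only [Set.mem_diff, Set.mem_singleton_iff] at h3
      exact ⟨fun hxM => (h3.mp ⟨hxM, hx⟩).1, fun hxL => (h3.mpr ⟨hxL, hx⟩).1⟩
  · exfalso
    have hb1L : b1 ∉ L := by
      intro hb1L
      have h3 := Set.ext_iff.mp h1 b1
      simp only [Set.mem_diff, Set.mem_singleton_iff] at h3
      exact (h3.mpr ⟨hb1L, e1⟩).2 trivial
    by_cases e2 : b2 = a2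
    · subst e2
      have hML : M = L := by
        ext x
        by_cases hx : x = b2
        · subst hx; exact ⟨fun _ => ha2, fun _ => hb2⟩
        · have h3 := Set.ext_iff.mp h2 x
          simp only [Set.mem_diff, Set.mem_singleton_iff] at h3
          exact ⟨fun hxM => (h3.mp ⟨hxM, hx⟩).1, fun hxL => (h3.mpr ⟨hxL, hx⟩).1⟩
      exact hb1L (hML ▸ hb1)
    · have hb2L : b2 ∉ L := by
        intro hb2L
        have h3 := Set.ext_iff.mp h2 b2
        simp only [Set.mem_diff, Set.mem_singleton_iff] at h3
        exact (h3.mpr ⟨hb2L, e2⟩).2 trivial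
      have h4 : b2 ∈ L \ {a1} := by
        rw [← h1]
        exact ⟨hb2, fun h => hb (Set.mem_singleton_iff.mp h).symm⟩
      exact hb2L h4.1

/-- The row profile of a rectangle minus a corner. -/
def nrprof (A B i : ℕ) : ℕ := if i + 1 < A then B else if i + 1 = A then B - 1 else 0

lemma nrprof_cases (A B i : ℕ) :
    (i + 1 < A ∧ nrprof A B i = B) ∨ (i + 1 = A ∧ nrprof A B i = B - 1) ∨
      (A < i + 1 ∧ nrprof A B i = 0) := by
  unfold nrprof
  split_ifs with h1 h2
  · exact Or.inl ⟨h1, rfl⟩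
  · exact Or.inr (Or.inl ⟨h2, rfl⟩)
  · exact Or.inr (Or.inr ⟨by omega, rfl⟩)

lemma rowLen_ofRowLens' (w : List ℕ) (hw : w.SortedGE) (i : ℕ) :
    (YoungDiagram.ofRowLens w hw).rowLen i = w.getD i 0 := by
  rcases Nat.lt_or_ge i w.length with h | h
  · have h2 := YoungDiagram.rowLen_ofRowLens (w := w) (hw := hw) ⟨i, h⟩
    rw [List.getD_eq_getElem _ _ h]
    exact h2
  · rw [List.getD_eq_default _ _ h]
    apply rowLen_eq_of
    intro j
    constructor
    · intro hm
      rw [YoungDiagram.mem_ofRowLens] at hm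
      obtain ⟨hlen, _⟩ := hm
      exact absurd hlen (by simp; omega)
    · intro hj; exact absurd hj (Nat.not_lt_zero _)

/-- An `m`-partition with a unique removable node is a rectangle in a single component. -/
lemma rect_structure {m : ℕ} {μ : Fin m → YoungDiagram}
    (hne : ∃ k, 0 < (μ k).rowLen 0)
    (huniq : ∀ β1 β2 : MNode m, IsRemovable μ β1 → IsRemovable μ β2 → β1 = β2) :
    ∃ (k : Fin m) (A B : ℕ), 1 ≤ A ∧ 1 ≤ B ∧
      (∀ j, j ≠ k → ∀ i, (μ j).rowLen i = 0) ∧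
      (∀ i, (μ k).rowLen i = if i < A then B else 0) ∧
      ∀ β : MNode m, IsRemovable μ β → β = (k, A - 1, B - 1) := by
  obtain ⟨k, hk⟩ := hne
  obtain ⟨r0, hr0⟩ := exists_descent hk
  have hrem0 : IsRemovable μ (k, r0, (μ k).rowLen r0 - 1) := isRemovable_of_descent hr0
  have hdesc : ∀ r, (μ k).rowLen (r+1) < (μ k).rowLen r → r = r0 := by
    intro r hr
    have h2 := huniq _ _ (isRemovable_of_descent hr) hrem0
    exact congrArg (fun p : MNode m => p.2.1) h2
  have hzero : ∀ j, j ≠ k → ∀ i, (μ j).rowLen i = 0 := by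
    intro j hj i
    by_contra hcon
    have h0 : 0 < (μ j).rowLen 0 :=
      lt_of_lt_of_le (Nat.pos_of_ne_zero hcon) ((μ j).rowLen_anti 0 i (Nat.zero_le i))
    obtain ⟨r', hr'⟩ := exists_descent h0
    have h2 := huniq _ _ (isRemovable_of_descent hr') hrem0
    exact hj (congrArg Prod.fst h2)
  have hconst : ∀ i, i ≤ r0 → (μ k).rowLen i = (μ k).rowLen 0 :=
    fun i hi => const_of_no_descent i (Nat.zero_le i)
      (fun r _ hrb hd => by have := hdesc r hd; omega)
  have hz2 : (μ k).rowLen (r0+1) = 0 :=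
    zero_of_no_descent_ge (fun r hr hd => by have := hdesc r hd; omega)
  refine ⟨k, r0 + 1, (μ k).rowLen 0, by omega, hk, hzero, ?_, ?_⟩
  · intro i
    by_cases hi : i < r0 + 1
    · rw [if_pos hi, hconst i (by omega)]
    · rw [if_neg hi]
      have := (μ k).rowLen_anti (r0+1) i (by omega)
      omega
  · intro β hβ
    have heq := huniq β _ hβ hrem0
    have hc0 : (μ k).rowLen r0 = (μ k).rowLen 0 := hconst r0 le_rfl
    rw [heq, hc0]
    simp

end Aux

/-- Lemma A.2.  Let `lam` be an `m`-partition of `n` which is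
(i) not of the form `(∅,…,∅,μ,∅,…,∅)` with `|μ| ≤ 2` or `μ ∈ {(2,1), (2,1,1), (3,1)}`,
and (ii) not of the form `(∅,…,∅,□,∅,…,∅,□,∅,…,∅)`.  Then for any `m`-partitions
`Λ_1, …, Λ_l` of `n` all different from `lam`, the set of `m`-partitions obtained from
`lam` by removing a removable `m`-node differs from the set of `m`-partitions obtained
from some `Λ_j` by removing a removable `m`-node. -/
theorem removed_shapes_distinguish
    (m n l : ℕ) (hl : 1 ≤ l)
    (lam : Fin m → YoungDiagram) (hlam : ∑ k, (lam k).card = n)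
    (hi : ¬ ∃ k : Fin m, (∀ j, j ≠ k → (lam j).cells = ∅) ∧
        ((lam k).card ≤ 2 ∨
          lam k = YoungDiagram.ofRowLens [2, 1] (by decide) ∨
          lam k = YoungDiagram.ofRowLens [2, 1, 1] (by decide) ∨
          lam k = YoungDiagram.ofRowLens [3, 1] (by decide)))
    (hii : ¬ ∃ k k' : Fin m, k ≠ k' ∧ (lam k).card = 1 ∧ (lam k').card = 1 ∧
        ∀ j, j ≠ k → j ≠ k' → (lam j).cells = ∅)
    (Λ : Fin l → Fin m → YoungDiagram) (hΛn : ∀ j, ∑ k, (Λ j k).card = n)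
    (hΛ : ∀ j, Λ j ≠ lam) :
    {ν : Fin m → YoungDiagram | ∃ α, IsRemovable lam α ∧ RemovedShape lam ν α} ≠
      {ν : Fin m → YoungDiagram |
        ∃ (j : Fin l) (α : MNode m), IsRemovable (Λ j) α ∧ RemovedShape (Λ j) ν α} := by
  classical
  intro hEq
  rcases Nat.eq_zero_or_pos m with hm0 | hm
  · exact hΛ ⟨0, hl⟩ (funext fun k => absurd k.2 (by omega))
  have htrans : ∀ ν : Fin m → YoungDiagram,
      (∃ α, IsRemovable lam α ∧ RemovedShape lam ν α) ↔
        (∃ (j : Fin l) (α : MNode m), IsRemovable (Λ j) α ∧ RemovedShape (Λ j) ν α) :=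
    fun ν => Set.ext_iff.mp hEq ν
  -- n ≥ 3
  have hn3 : 3 ≤ n := by
    by_contra hn
    push_neg at hn
    by_cases hsingle : ∃ k, ∀ j', j' ≠ k → (lam j').cells = ∅
    · obtain ⟨k0, hk0⟩ := hsingle
      apply hi
      refine ⟨k0, hk0, Or.inl ?_⟩
      have h1 : ∑ k, (lam k).card = (lam k0).card :=
        Finset.sum_eq_single k0
          (fun b _ hb => by show (lam b).cells.card = 0; rw [hk0 b hb]; rfl)
          (fun h => absurd (Finset.mem_univ k0) h)
      omega
    · push_neg at hsingle
      obtain ⟨j1, hj1k, hj1⟩ := hsingle ⟨0, hm⟩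
      obtain ⟨j2, hj2j1, hj2⟩ := hsingle j1
      have c1 : 0 < (lam j1).card := Finset.card_pos.2 hj1
      have c2 : 0 < (lam j2).card := Finset.card_pos.2 hj2
      have hp2 : ∑ x ∈ ({j1, j2} : Finset (Fin m)), (lam x).card
          = (lam j1).card + (lam j2).card := Finset.sum_pair (Ne.symm hj2j1)
      have hple : ∑ x ∈ ({j1, j2} : Finset (Fin m)), (lam x).card ≤ ∑ k, (lam k).card :=
        Finset.sum_le_sum_of_subset (Finset.subset_univ _)
      have hpair : (lam j1).card + (lam j2).card ≤ n := by omega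
      apply hii
      refine ⟨j1, j2, Ne.symm hj2j1, by omega, by omega, ?_⟩
      intro j hja hjb
      by_contra hne
      have c3 : 0 < (lam j).card := Finset.card_pos.2 (Finset.nonempty_iff_ne_empty.2 hne)
      have ht3 : ∑ x ∈ insert j ({j1, j2} : Finset (Fin m)), (lam x).card
          = (lam j).card + ((lam j1).card + (lam j2).card) := by
        rw [Finset.sum_insert (show j ∉ ({j1, j2} : Finset (Fin m)) by simp [hja, hjb]), hp2]
      have htle : ∑ x ∈ insert j ({j1, j2} : Finset (Fin m)), (lam x).card
          ≤ ∑ k, (lam k).card := Finset.sum_le_sum_of_subset (Finset.subset_univ _)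
      omega
  -- each Λ j is nonempty
  have hΛne : ∀ j, ∃ k, 0 < (Λ j k).rowLen 0 := by
    intro j
    by_contra hc
    push_neg at hc
    have hz : ∀ k, (Λ j k).card = 0 := by
      intro k
      by_contra hcc
      have h2 := card_pos_iff'.mp (Nat.pos_of_ne_zero hcc)
      have h3 := hc k
      omega
    have h0 : ∑ k, (Λ j k).card = 0 := Finset.sum_eq_zero (fun k _ => hz k)
    have h4 := hΛn j
    omega
  -- Each Λ j is a rectangle in a single component
  have hstr : ∀ j : Fin l, ∃ (k : Fin m) (A B : ℕ), 1 ≤ A ∧ 1 ≤ B ∧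
      (∀ j', j' ≠ k → ∀ i, (Λ j j').rowLen i = 0) ∧
      (∀ i, (Λ j k).rowLen i = if i < A then B else 0) ∧
      (∀ β, IsRemovable (Λ j) β → β = (k, A - 1, B - 1)) := by
    intro j
    apply rect_structure (hΛne j)
    intro β1 β2 h1 h2
    by_contra hne
    obtain ⟨ν1, hν1⟩ := exists_removedShape h1
    obtain ⟨ν2, hν2⟩ := exists_removedShape h2
    obtain ⟨α1, ha1, hra1⟩ := (htrans ν1).mpr ⟨j, β1, h1, hν1⟩
    obtain ⟨α2, ha2, hra2⟩ := (htrans ν2).mpr ⟨j, β2, h2, hν2⟩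
    have e1 : CellsM (Λ j) \ {β1} = CellsM lam \ {α1} := by
      rw [← removedShape_cellsM hν1, removedShape_cellsM hra1]
    have e2 : CellsM (Λ j) \ {β2} = CellsM lam \ {α2} := by
      rw [← removedShape_cellsM hν2, removedShape_cellsM hra2]
    have hMeq : CellsM (Λ j) = CellsM lam :=
      set_step h1.1 h2.1 ha1.1 ha2.1 e1 e2 hne
    exact hΛ j (cellsM_inj hMeq)
  -- every removed shape of lam is a rectangle-minus-corner in a single component
  have hNR : ∀ ν : Fin m → YoungDiagram,
      (∃ α, IsRemovable lam α ∧ RemovedShape lam ν α) →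
      ∃ (k : Fin m) (A B : ℕ), 1 ≤ A ∧ 1 ≤ B ∧
        (∀ j', j' ≠ k → ∀ i, (ν j').rowLen i = 0) ∧
        (∀ i, (ν k).rowLen i = nrprof A B i) := by
    intro ν hν
    obtain ⟨j, β, hβ, hrs⟩ := (htrans ν).mp hν
    obtain ⟨k, A, B, hA, hB, hz, hprof, hu⟩ := hstr j
    have hβeq := hu β hβ
    rw [hβeq] at hβ hrs
    obtain ⟨hνprof, hνoth⟩ := removedShape_rowLen' hβ hrs
    refine ⟨k, A, B, hA, hB, ?_, ?_⟩
    · intro j' hj' i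
      rw [hνoth j' hj']
      exact hz j' hj' i
    · intro i
      rw [hνprof i, hprof i]
      unfold nrprof
      split_ifs <;> omega
  -- main case split
  by_cases hsingle : ∃ k, ∀ j', j' ≠ k → (lam j').cells = ∅
  · -- single nonempty component
    obtain ⟨k0, hk0⟩ := hsingle
    have hzlam : ∀ j', j' ≠ k0 → ∀ i, (lam j').rowLen i = 0 := by
      intro j' hj' i
      apply rowLen_eq_of
      intro j
      constructor
      · intro hmem
        exfalso
        have h2 : ((i, j) : ℕ × ℕ) ∈ (lam j').cells := (YoungDiagram.mem_cells _).2 hmem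
        rw [hk0 j' hj'] at h2
        exact absurd h2 (Finset.notMem_empty _)
      · intro hj; exact absurd hj (Nat.not_lt_zero _)
    have hcard : (lam k0).card = n := by
      have h1 : ∑ k, (lam k).card = (lam k0).card :=
        Finset.sum_eq_single k0
          (fun b _ hb => by show (lam b).cells.card = 0; rw [hk0 b hb]; rfl)
          (fun h => absurd (Finset.mem_univ k0) h)
      omega
    have hpos0 : 0 < (lam k0).rowLen 0 := card_pos_iff'.mp (by omega)
    have hdesc_ex : ∃ r, (lam k0).rowLen (r+1) < (lam k0).rowLen r := exists_descent hpos0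
    set r1 := Nat.find hdesc_ex with hr1def
    have hr1 : (lam k0).rowLen (r1+1) < (lam k0).rowLen r1 := Nat.find_spec hdesc_ex
    have hr1min : ∀ r, r < r1 → ¬ (lam k0).rowLen (r+1) < (lam k0).rowLen r :=
      fun r hr => Nat.find_min hdesc_ex hr
    have hconst1 : ∀ i, i ≤ r1 → (lam k0).rowLen i = (lam k0).rowLen 0 :=
      fun i hi => const_of_no_descent i (Nat.zero_le i) (fun r _ hrb => hr1min r (by omega))
    set x := (lam k0).rowLen 0 with hxdef
    have hx1 : 1 ≤ x := hpos0
    have hxr1 : (lam k0).rowLen r1 = x := hconst1 r1 le_rfl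
    by_cases h2d : ∃ r', ((lam k0).rowLen (r'+1) < (lam k0).rowLen r') ∧ r' ≠ r1
    · -- at least two descents
      have hr2spec := Nat.find_spec h2d
      set r2 := Nat.find h2d with hr2def
      obtain ⟨hr2d, hr2ne⟩ := hr2spec
      have hr2gt : r1 < r2 := by
        rcases Nat.lt_or_ge r2 r1 with h | h
        · exact absurd hr2d (hr1min r2 h)
        · omega
      by_cases h3d : ∃ r3, ((lam k0).rowLen (r3+1) < (lam k0).rowLen r3) ∧ r2 < r3
      · -- three descents: contradiction
        obtain ⟨r3, hd3, hgt3⟩ := h3d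
        have hrem := isRemovable_of_descent (μ := lam) (k := k0) hr2d
        obtain ⟨ν, hν⟩ := exists_removedShape hrem
        obtain ⟨khat, A, B, hA, hB, hz, hp⟩ := hNR ν ⟨_, hrem, hν⟩
        obtain ⟨hνprof, hνoth⟩ := removedShape_rowLen' hrem hν
        have hr3pos : 0 < (lam k0).rowLen r3 := by omega
        have hkhat : khat = k0 := by
          by_contra hne
          have hz0 := hz k0 (fun h => hne h.symm) r3
          have q := hνprof r3
          rw [if_neg (by omega)] at q
          omega
        subst khat
        have q1 := hνprof (r2-1)
        rw [if_neg (by omega)] at q1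
        have q2 := hνprof r2
        rw [if_pos rfl] at q2
        have q3 := hνprof r3
        rw [if_neg (by omega)] at q3
        have q4 := hνprof (r3+1)
        rw [if_neg (by omega)] at q4
        have m1 := (lam k0).rowLen_anti (r2-1) r2 (by omega)
        have m2 := (lam k0).rowLen_anti r2 r3 (by omega)
        have w1 := hp (r2-1); have w2 := hp r2; have w3 := hp r3; have w4 := hp (r3+1)
        have n1 := nrprof_cases A B (r2-1); have n2 := nrprof_cases A B r2
        have n3 := nrprof_cases A B r3; have n4 := nrprof_cases A B (r3+1)
        omega
      · -- exactly two descents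
        push_neg at h3d
        have hnod : ∀ r, (lam k0).rowLen (r+1) < (lam k0).rowLen r → r = r1 ∨ r = r2 := by
          intro r hr
          by_cases h : r = r1
          · exact Or.inl h
          · right
            have hge : r2 ≤ r := by
              by_contra hlt
              exact (Nat.find_min h2d (by omega)) ⟨hr, h⟩
            have hle2 : r ≤ r2 := h3d r hr
            omega
        set y := (lam k0).rowLen (r1+1) with hydef
        have hf : ∀ i, (lam k0).rowLen i = if i ≤ r1 then x else if i ≤ r2 then y else 0 := by
          intro i
          split_ifs with hc1 hc2
          · exact hconst1 i hc1
          · rw [hydef]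
            exact const_of_no_descent i (by omega)
              (fun r hra hrb hd => by rcases hnod r hd with h | h <;> omega)
          · have hz0 : (lam k0).rowLen (r2+1) = 0 :=
              zero_of_no_descent_ge (fun r hr hd => by rcases hnod r hd with h | h <;> omega)
            have h9 := (lam k0).rowLen_anti (r2+1) i (by omega)
            omega
        have hyr2 : (lam k0).rowLen r2 = y := by
          have h9 := hf r2; rw [if_neg (by omega), if_pos le_rfl] at h9; exact h9
        have hxy : y < x := by omega
        have hy1 : 1 ≤ y := by
          have h9 := hf (r2+1); rw [if_neg (by omega), if_neg (by omega)] at h9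
          omega
        have hr10 : r1 = 0 := by
          by_contra hne0
          have hrem := isRemovable_of_descent (μ := lam) (k := k0) hr1
          obtain ⟨ν, hν⟩ := exists_removedShape hrem
          obtain ⟨khat, A, B, hA, hB, hz, hp⟩ := hNR ν ⟨_, hrem, hν⟩
          obtain ⟨hνprof, hνoth⟩ := removedShape_rowLen' hrem hν
          have hkhat : khat = k0 := by
            by_contra hne
            have hz0 := hz k0 (fun h => hne h.symm) 0
            have q := hνprof 0
            rw [if_neg (by omega)] at q
            omega
          subst khat
          have q1 := hνprof (r1-1)
          rw [if_neg (by omega)] at q1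
          have q2 := hνprof r1
          rw [if_pos rfl] at q2
          have q3 := hνprof r2
          rw [if_neg (by omega)] at q3
          have q4 := hνprof (r2+1)
          rw [if_neg (by omega)] at q4
          have v1 := hf (r1-1); rw [if_pos (by omega)] at v1
          have v4 := hf (r2+1); rw [if_neg (by omega), if_neg (by omega)] at v4
          have w1 := hp (r1-1); have w2 := hp r1; have w3 := hp r2; have w4 := hp (r2+1)
          have n1 := nrprof_cases A B (r1-1); have n2 := nrprof_cases A B r1
          have n3 := nrprof_cases A B r2; have n4 := nrprof_cases A B (r2+1)
          omega
        -- C1 : removal at row 0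
        have hrem1 := isRemovable_of_descent (μ := lam) (k := k0) hr1
        obtain ⟨ν1, hν1⟩ := exists_removedShape hrem1
        obtain ⟨k1, A1, B1, hA1, hB1, hz1, hp1⟩ := hNR ν1 ⟨_, hrem1, hν1⟩
        obtain ⟨hν1prof, hν1oth⟩ := removedShape_rowLen' hrem1 hν1
        have hv1 : (lam k0).rowLen 1 = y := by
          have h9 := hf 1; rw [if_neg (by omega), if_pos (by omega)] at h9; exact h9
        have hk1 : k1 = k0 := by
          by_contra hne
          have hz0 := hz1 k0 (fun h => hne h.symm) 1
          have q := hν1prof 1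
          rw [if_neg (by omega)] at q
          omega
        subst k1
        have hF1 : ∀ i, ((i = r1 ∧ (ν1 k0).rowLen i = x - 1) ∨
            (r1 < i ∧ i ≤ r2 ∧ (ν1 k0).rowLen i = y) ∨
            (r2 < i ∧ (ν1 k0).rowLen i = 0)) := by
          intro i
          have q := hν1prof i
          by_cases hic : i = r1
          · rw [if_pos hic] at q
            left
            refine ⟨hic, ?_⟩
            rw [hic] at q ⊢
            omega
          · rw [if_neg hic] at q
            have hfi := hf i
            split_ifs at hfi with hc1 hc2
            · omega
            · right; left; exact ⟨by omega, by omega, by omega⟩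
            · right; right; exact ⟨by omega, by omega⟩
        have hkey : (x = y + 1 ∧ y = 1) ∨ (x = y + 2 ∧ r2 = 1) := by
          have a1 := hF1 0; have a2 := hF1 1; have a3 := hF1 r2; have a4 := hF1 (r2+1)
          have a5 := hF1 (A1-1); have a6 := hF1 A1
          have b1 := hp1 0; have b2 := hp1 1; have b3 := hp1 r2; have b4 := hp1 (r2+1)
          have b5 := hp1 (A1-1); have b6 := hp1 A1
          have c1 := nrprof_cases A1 B1 0; have c2 := nrprof_cases A1 B1 1
          have c3 := nrprof_cases A1 B1 r2; have c4 := nrprof_cases A1 B1 (r2+1)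
          have c5 := nrprof_cases A1 B1 (A1-1); have c6 := nrprof_cases A1 B1 A1
          omega
        -- C2 : removal at row r2
        have hrem2 := isRemovable_of_descent (μ := lam) (k := k0) hr2d
        obtain ⟨ν2, hν2⟩ := exists_removedShape hrem2
        obtain ⟨k2, A2, B2, hA2, hB2, hz2, hp2⟩ := hNR ν2 ⟨_, hrem2, hν2⟩
        obtain ⟨hν2prof, hν2oth⟩ := removedShape_rowLen' hrem2 hν2
        have hk2 : k2 = k0 := by
          by_contra hne
          have hz0 := hz2 k0 (fun h => hne h.symm) 0
          have q := hν2prof 0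
          rw [if_neg (by omega)] at q
          omega
        subst k2
        have hF2 : ∀ i, ((i = 0 ∧ (ν2 k0).rowLen i = x) ∨
            (1 ≤ i ∧ i < r2 ∧ (ν2 k0).rowLen i = y) ∨
            (i = r2 ∧ (ν2 k0).rowLen i = y - 1) ∨
            (r2 < i ∧ (ν2 k0).rowLen i = 0)) := by
          intro i
          have q := hν2prof i
          by_cases hic : i = r2
          · rw [if_pos hic] at q
            right; right; left
            refine ⟨hic, ?_⟩
            rw [hic] at q ⊢
            omega
          · rw [if_neg hic] at q
            have hfi := hf i
            split_ifs at hfi with hc1 hc2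
            · left; exact ⟨by omega, by omega⟩
            · right; left; exact ⟨by omega, by omega, by omega⟩
            · right; right; right; exact ⟨by omega, by omega⟩
        rcases hkey with ⟨hxv, hyv⟩ | ⟨hxv, hr2v⟩
        · -- lam k0 = (2, 1^{r2})
          rcases Nat.lt_or_ge r2 3 with hr2s | hr2b
          · apply hi
            refine ⟨k0, hk0, ?_⟩
            have hr12 : r2 = 1 ∨ r2 = 2 := by omega
            rcases hr12 with h | h
            · refine Or.inr (Or.inl ?_)
              apply eq_of_rowLen_eq
              intro i
              rw [hf i, rowLen_ofRowLens']
              rcases i with _ | _ | i <;>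
                simp only [List.getD_cons_zero, List.getD_cons_succ, List.getD_nil] <;>
                split_ifs <;> omega
            · refine Or.inr (Or.inr (Or.inl ?_))
              apply eq_of_rowLen_eq
              intro i
              rw [hf i, rowLen_ofRowLens']
              rcases i with _ | _ | _ | i <;>
                simp only [List.getD_cons_zero, List.getD_cons_succ, List.getD_nil] <;>
                split_ifs <;> omega
          · -- r2 ≥ 3 : contradiction
            have a1 := hF2 0; have a2 := hF2 1; have a3 := hF2 2
            have b1 := hp2 0; have b2 := hp2 1; have b3 := hp2 2
            have c1 := nrprof_cases A2 B2 0; have c2 := nrprof_cases A2 B2 1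
            have c3 := nrprof_cases A2 B2 2
            omega
        · -- lam k0 = (y+2, y) with r2 = 1
          rcases Nat.lt_or_ge y 2 with hy2 | hy2
          · apply hi
            refine ⟨k0, hk0, Or.inr (Or.inr (Or.inr ?_))⟩
            apply eq_of_rowLen_eq
            intro i
            rw [hf i, rowLen_ofRowLens']
            rcases i with _ | _ | i <;>
              simp only [List.getD_cons_zero, List.getD_cons_succ, List.getD_nil] <;>
              split_ifs <;> omega
          · -- y ≥ 2 : contradiction
            have a1 := hF2 0; have a2 := hF2 1; have a3 := hF2 2
            have b1 := hp2 0; have b2 := hp2 1; have b3 := hp2 2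
            have c1 := nrprof_cases A2 B2 0; have c2 := nrprof_cases A2 B2 1
            have c3 := nrprof_cases A2 B2 2
            omega
    · -- rectangle : unique descent r1
      push_neg at h2d
      have hz2 : ∀ i, r1 < i → (lam k0).rowLen i = 0 := by
        intro i hi
        have hz0 : (lam k0).rowLen (r1+1) = 0 :=
          zero_of_no_descent_ge (fun r hr hd => by have := h2d r hd; omega)
        have h9 := (lam k0).rowLen_anti (r1+1) i (by omega)
        omega
      have ht1 : ¬(r1 = 0 ∧ x ≤ 2) := by
        rintro ⟨h0, h2⟩
        have hsub : ∀ p ∈ lam k0, p ∈ ({(0,0),(0,1)} : Finset (ℕ × ℕ)) := by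
          rintro ⟨i, j⟩ hp
          rw [YoungDiagram.mem_iff_lt_rowLen] at hp
          have hi0 : i = 0 := by
            by_contra hic
            have := hz2 i (by omega)
            omega
          subst hi0
          have hj01 : j = 0 ∨ j = 1 := by omega
          rcases hj01 with rfl | rfl <;> simp
        have hle := card_le_of_forall_mem hsub
        have hc2 : ({(0,0),(0,1)} : Finset (ℕ × ℕ)).card ≤ 2 := by decide
        omega
      have ht2 : ¬(x = 1 ∧ r1 ≤ 1) := by
        rintro ⟨h0, h2⟩
        have hsub : ∀ p ∈ lam k0, p ∈ ({(0,0),(1,0)} : Finset (ℕ × ℕ)) := by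
          rintro ⟨i, j⟩ hp
          rw [YoungDiagram.mem_iff_lt_rowLen] at hp
          rcases Nat.lt_or_ge r1 i with hcase | hcase
          · have := hz2 i hcase; omega
          · have h9 := hconst1 i hcase
            have hij : (i = 0 ∨ i = 1) ∧ j = 0 := by omega
            obtain ⟨hi01, rfl⟩ := hij
            rcases hi01 with rfl | rfl <;> simp
        have hle := card_le_of_forall_mem hsub
        have hc2 : ({(0,0),(1,0)} : Finset (ℕ × ℕ)).card ≤ 2 := by decide
        omega
      have hrem := isRemovable_of_descent (μ := lam) (k := k0) hr1
      obtain ⟨ν, hν⟩ := exists_removedShape hrem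
      obtain ⟨j, β, hβ, hrs⟩ := (htrans ν).mp ⟨_, hrem, hν⟩
      obtain ⟨kj, A, B, hA, hB, hzj, hpj, huj⟩ := hstr j
      have hβeq := huj β hβ
      rw [hβeq] at hβ hrs
      obtain ⟨hν2prof, hν2oth⟩ := removedShape_rowLen' hβ hrs
      obtain ⟨hν1prof, hν1oth⟩ := removedShape_rowLen' hrem hν
      have hkj : kj = k0 := by
        by_contra hne
        have hzz : (ν k0).rowLen 0 = 0 := by
          rw [hν2oth k0 (fun h => hne h.symm)]
          exact hzj k0 (fun h => hne h.symm) 0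
        have h01 := hν1prof 0
        split_ifs at h01 with hc0
        · rw [← hc0] at hxr1 h01
          omega
        · omega
      subst kj
      have hFL : ∀ i, ((i < r1 ∧ (ν k0).rowLen i = x) ∨ (i = r1 ∧ (ν k0).rowLen i = x - 1) ∨
          (r1 < i ∧ (ν k0).rowLen i = 0)) := by
        intro i
        have q := hν1prof i
        by_cases hic : i = r1
        · rw [if_pos hic] at q
          right; left
          refine ⟨hic, ?_⟩
          rw [hic] at q ⊢
          omega
        · rw [if_neg hic] at q
          rcases Nat.lt_or_ge i r1 with h2 | h2
          · left
            refine ⟨h2, ?_⟩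
            rw [q]
            exact hconst1 i (by omega)
          · right; right
            refine ⟨by omega, ?_⟩
            rw [q]
            exact hz2 i (by omega)
      have hFR : ∀ i, ((i = A-1 ∧ (ν k0).rowLen i = B - 1) ∨
          (¬ i = A-1 ∧ i < A ∧ (ν k0).rowLen i = B) ∨
          (¬ i = A-1 ∧ A ≤ i ∧ (ν k0).rowLen i = 0)) := by
        intro i
        have q := hν2prof i
        by_cases hic : i = A-1
        · rw [if_pos hic] at q
          exact Or.inl ⟨hic, q⟩
        · rw [if_neg hic] at q
          rw [hpj i] at q
          split_ifs at q with h3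
          · exact Or.inr (Or.inl ⟨hic, h3, q⟩)
          · exact Or.inr (Or.inr ⟨hic, by omega, q⟩)
      have hAB : A = r1 + 1 ∧ B = x := by
        have a1 := hFL 0; have a2 := hFL r1; have a3 := hFL (r1+1)
        have a4 := hFL (A-1); have a5 := hFL A
        have b1 := hFR 0; have b2 := hFR r1; have b3 := hFR (r1+1)
        have b4 := hFR (A-1); have b5 := hFR A
        omega
      apply hΛ j
      funext k'
      by_cases hk' : k' = k0
      · subst hk'
        apply eq_of_rowLen_eq
        intro i
        rw [hpj i]
        rcases Nat.lt_or_ge i (r1+1) with hic | hic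
        · rw [if_pos (by omega)]
          have := hconst1 i (by omega)
          omega
        · rw [if_neg (by omega)]
          have := hz2 i (by omega)
          omega
      · apply eq_of_rowLen_eq
        intro i
        rw [hzj k' hk' i, hzlam k' hk' i]
  · -- at least two nonempty components
    push_neg at hsingle
    obtain ⟨j1, hj1k, hj1⟩ := hsingle ⟨0, hm⟩
    obtain ⟨j2, hj2j1, hj2⟩ := hsingle j1
    have c1 : 0 < (lam j1).card := Finset.card_pos.2 hj1
    have c2 : 0 < (lam j2).card := Finset.card_pos.2 hj2
    by_cases hbig : ∃ a, 2 ≤ (lam a).card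
    · obtain ⟨a, ha2⟩ := hbig
      obtain ⟨b, hba, hbne⟩ : ∃ b, b ≠ a ∧ (lam b).cells ≠ ∅ := by
        by_cases haj : a = j1
        · exact ⟨j2, by rw [haj]; exact hj2j1, hj2.ne_empty⟩
        · exact ⟨j1, fun h => haj h.symm, hj1.ne_empty⟩
      have hpos : 0 < (lam a).rowLen 0 := card_pos_iff'.mp (by omega)
      obtain ⟨r, hr⟩ := exists_descent hpos
      have hrem := isRemovable_of_descent (μ := lam) (k := a) hr
      obtain ⟨ν, hν⟩ := exists_removedShape hrem
      obtain ⟨khat, A, B, hA, hB, hz, hp⟩ := hNR ν ⟨_, hrem, hν⟩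
      obtain ⟨hνprof, hνoth⟩ := removedShape_rowLen' hrem hν
      have ha2' : 2 ≤ (lam a).cells.card := ha2
      have hmem : ((r : ℕ), (lam a).rowLen r - 1) ∈ (lam a).cells := by
        rw [YoungDiagram.mem_cells, YoungDiagram.mem_iff_lt_rowLen]
        omega
      have hc1 : (ν a).cells = (lam a).cells.erase (r, (lam a).rowLen r - 1) := hν.1
      have hca : (ν a).cells.card = (lam a).cells.card - 1 := by
        rw [hc1, Finset.card_erase_of_mem hmem]
      have hνa : 0 < (ν a).rowLen 0 := card_pos_iff'.mp (by
        show 0 < (ν a).cells.card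
        omega)
      have hνb : 0 < (ν b).rowLen 0 := by
        rw [hνoth b hba]
        exact card_pos_iff'.mp (Finset.card_pos.2 (Finset.nonempty_iff_ne_empty.2 hbne))
      have hfa : a = khat := by
        by_contra hne
        have := hz a hne 0
        omega
      have hfb : b = khat := by
        by_contra hne
        have := hz b hne 0
        omega
      exact hba (hfb.trans hfa.symm)
    · push_neg at hbig
      obtain ⟨j3, hj31, hj32, hj3⟩ : ∃ j3, j3 ≠ j1 ∧ j3 ≠ j2 ∧ (lam j3).cells ≠ ∅ := by
        by_contra hc
        push_neg at hc
        have hp2 : ∑ x ∈ ({j1, j2} : Finset (Fin m)), (lam x).card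
            = (lam j1).card + (lam j2).card := Finset.sum_pair (Ne.symm hj2j1)
        have hsum : ∑ k, (lam k).card = ∑ x ∈ ({j1, j2} : Finset (Fin m)), (lam x).card := by
          symm
          apply Finset.sum_subset (Finset.subset_univ _)
          intro z _ hx
          simp only [Finset.mem_insert, Finset.mem_singleton] at hx
          push_neg at hx
          show (lam z).cells.card = 0
          rw [hc z hx.1 hx.2]
          rfl
        have hb1 := hbig j1
        have hb2 := hbig j2
        omega
      have cc3 : 0 < (lam j3).card := Finset.card_pos.2 (Finset.nonempty_iff_ne_empty.2 hj3)
      have hpos : 0 < (lam j1).rowLen 0 := card_pos_iff'.mp c1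
      obtain ⟨r, hr⟩ := exists_descent hpos
      have hrem := isRemovable_of_descent (μ := lam) (k := j1) hr
      obtain ⟨ν, hν⟩ := exists_removedShape hrem
      obtain ⟨khat, A, B, hA, hB, hz, hp⟩ := hNR ν ⟨_, hrem, hν⟩
      obtain ⟨hνprof, hνoth⟩ := removedShape_rowLen' hrem hν
      have hν2 : 0 < (ν j2).rowLen 0 := by
        rw [hνoth j2 hj2j1]
        exact card_pos_iff'.mp c2
      have hν3 : 0 < (ν j3).rowLen 0 := by
        rw [hνoth j3 hj31]
        exact card_pos_iff'.mp cc3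
      have hfa : j2 = khat := by
        by_contra hne
        have := hz j2 hne 0
        omega
      have hfb : j3 = khat := by
        by_contra hne
        have := hz j3 hne 0
        omega
      exact hj32 (hfb.trans hfa.symm)


end CHA
end
end

section
/- For all integers m ≥ 1 and n ≥ 0, the sum, over all m-partitions λ of n, of the square of the number of standard m-tableaux of shape λ equals n!·mⁿ. -/
open Classical

noncomputable section

namespace CHA

open YoungDiagram Finset Function


open YoungDiagram Finset

/-! ### Single-diagram corner theory -/

theorem yd_ext {μ ν : YoungDiagram} (h : μ.cells = ν.cells) : μ = ν := by
  cases μ; cases ν; simpa using h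

theorem mem_iff' {ν : YoungDiagram} {x : ℕ × ℕ} : x ∈ ν ↔ x.2 < ν.rowLen x.1 := by
  obtain ⟨i, j⟩ := x; exact YoungDiagram.mem_iff_lt_rowLen

/-- `c` is an addable corner of `ν` (row form). -/
def Addable (ν : YoungDiagram) (c : ℕ × ℕ) : Prop :=
  c.2 = ν.rowLen c.1 ∧ (c.1 = 0 ∨ ν.rowLen c.1 < ν.rowLen (c.1 - 1))

/-- `c` is a removable corner of `ν`. -/
def Removable (ν : YoungDiagram) (c : ℕ × ℕ) : Prop :=
  c ∈ ν ∧ (c.1 + 1, c.2) ∉ ν ∧ (c.1, c.2 + 1) ∉ ν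

theorem rowLen_eq_of_s19 {ν : YoungDiagram} {i j : ℕ} (h1 : (i, j) ∉ ν)
    (h2 : j = 0 ∨ (i, j - 1) ∈ ν) : ν.rowLen i = j := by
  rw [mem_iff_lt_rowLen, not_lt] at h1
  rcases h2 with h2 | h2
  · omega
  · rw [mem_iff_lt_rowLen] at h2; omega

theorem addable_notMem {ν : YoungDiagram} {c : ℕ × ℕ} (h : Addable ν c) : c ∉ ν := by
  obtain ⟨h1, _⟩ := h; rw [mem_iff']; omega

theorem removable_iff {ν : YoungDiagram} {c : ℕ × ℕ} :
    Removable ν c ↔ c.2 + 1 = ν.rowLen c.1 ∧ ν.rowLen (c.1 + 1) ≤ c.2 := by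
  obtain ⟨r, s⟩ := c
  simp only [Removable, mem_iff_lt_rowLen, not_lt]
  constructor <;> intro h <;> exact ⟨by omega, by omega⟩

/-- Adding an addable corner to a Young diagram. -/
def addT (ν : YoungDiagram) (c : ℕ × ℕ) : YoungDiagram :=
  if h : Addable ν c then
    ⟨insert c ν.cells, by
      intro b a hba ha
      simp only [Finset.coe_insert, Set.mem_insert_iff, Finset.mem_coe, mem_cells] at ha ⊢
      obtain ⟨hc2, hc1⟩ := h
      rcases ha with rfl | ha
      · rcases eq_or_ne a b with rfl | hne
        · exact Or.inl rfl
        · right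
          obtain ⟨h1, h2⟩ := hba
          rw [mem_iff']
          rcases lt_or_eq_of_le h1 with h1 | h1
          · rcases hc1 with h0 | h0
            · omega
            · have := ν.rowLen_anti a.1 (b.1 - 1) (by omega)
              omega
          · have h2' : a.2 < b.2 := by
              rcases lt_or_eq_of_le h2 with h | h
              · exact h
              · exact absurd (Prod.ext h1 h) hne
            have := ν.rowLen_anti a.1 b.1 (le_of_eq h1)
            rw [h1]
            omega
      · exact Or.inr (ν.isLowerSet hba ha)⟩
  else ν

/-- Removing a removable corner from a Young diagram. -/
def eraseT (ν : YoungDiagram) (c : ℕ × ℕ) : YoungDiagram :=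
  if h : Removable ν c then
    ⟨ν.cells.erase c, by
      intro b a hba ha
      simp only [Finset.coe_erase, Set.mem_diff, Set.mem_singleton_iff, Finset.mem_coe,
        mem_cells] at ha ⊢
      obtain ⟨ha, hane⟩ := ha
      refine ⟨ν.isLowerSet hba ha, ?_⟩
      rintro rfl
      obtain ⟨hc, h1, h2⟩ := h
      obtain ⟨h3, h4⟩ := hba
      rcases lt_or_eq_of_le h3 with h3 | h3
      · exact h1 (ν.up_left_mem (by omega) h4 ha)
      · rcases lt_or_eq_of_le h4 with h4 | h4
        · exact h2 (ν.up_left_mem (by omega) (by omega) ha)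
        · exact hane (Prod.ext h3 h4).symm⟩
  else ν

theorem cells_addT {ν : YoungDiagram} {c : ℕ × ℕ} (h : Addable ν c) :
    (addT ν c).cells = insert c ν.cells := by rw [addT, dif_pos h]

theorem cells_eraseT {ν : YoungDiagram} {c : ℕ × ℕ} (h : Removable ν c) :
    (eraseT ν c).cells = ν.cells.erase c := by rw [eraseT, dif_pos h]

theorem mem_addT {ν : YoungDiagram} {c : ℕ × ℕ} (h : Addable ν c) {x : ℕ × ℕ} :
    x ∈ addT ν c ↔ x = c ∨ x ∈ ν := by
  rw [← mem_cells, cells_addT h, Finset.mem_insert, mem_cells]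

theorem mem_eraseT {ν : YoungDiagram} {c : ℕ × ℕ} (h : Removable ν c) {x : ℕ × ℕ} :
    x ∈ eraseT ν c ↔ x ≠ c ∧ x ∈ ν := by
  rw [← mem_cells, cells_eraseT h, Finset.mem_erase, mem_cells]

theorem card_addT {ν : YoungDiagram} {c : ℕ × ℕ} (h : Addable ν c) :
    (addT ν c).card = ν.card + 1 := by
  show (addT ν c).cells.card = ν.cells.card + 1
  rw [cells_addT h, Finset.card_insert_of_notMem (by
    rw [mem_cells]; exact addable_notMem h)]

theorem card_eraseT {ν : YoungDiagram} {c : ℕ × ℕ} (h : Removable ν c) :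
    ν.card = (eraseT ν c).card + 1 := by
  have hc : c ∈ ν.cells := by rw [mem_cells]; exact h.1
  show ν.cells.card = (eraseT ν c).cells.card + 1
  rw [cells_eraseT h, Finset.card_erase_of_mem hc]
  have := Finset.card_pos.mpr ⟨c, hc⟩
  omega

theorem le_addT {ν : YoungDiagram} {c : ℕ × ℕ} (h : Addable ν c) : ν ≤ addT ν c := by
  rw [← cells_subset_iff, cells_addT h]; exact Finset.subset_insert _ _

theorem eraseT_le {ν : YoungDiagram} {c : ℕ × ℕ} (h : Removable ν c) : eraseT ν c ≤ ν := by
  rw [← cells_subset_iff, cells_eraseT h]; exact Finset.erase_subset _ _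

theorem removable_addT {ν : YoungDiagram} {c : ℕ × ℕ} (h : Addable ν c) :
    Removable (addT ν c) c := by
  obtain ⟨hc2, hc1⟩ := h
  have h' : Addable ν c := ⟨hc2, hc1⟩
  refine ⟨(mem_addT h').mpr (Or.inl rfl), ?_, ?_⟩
  · rw [mem_addT h']
    rintro (he | hm)
    · exact absurd (congrArg Prod.fst he) (by omega)
    · rw [mem_iff'] at hm
      have := ν.rowLen_anti c.1 (c.1 + 1) (by omega)
      simp only [] at hm
      omega
  · rw [mem_addT h']
    rintro (he | hm)
    · exact absurd (congrArg Prod.snd he) (by omega)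
    · rw [mem_iff'] at hm; simp only [] at hm; omega

theorem eraseT_addT {ν : YoungDiagram} {c : ℕ × ℕ} (h : Addable ν c) :
    eraseT (addT ν c) c = ν := by
  apply yd_ext
  rw [cells_eraseT (removable_addT h), cells_addT h,
    Finset.erase_insert (by rw [mem_cells]; exact addable_notMem h)]

theorem addable_eraseT {ν : YoungDiagram} {c : ℕ × ℕ} (h : Removable ν c) :
    Addable (eraseT ν c) c := by
  have hrow := removable_iff.mp h
  constructor
  · refine (rowLen_eq_of_s19 (by rw [mem_eraseT h]; simp) ?_).symm
    rcases Nat.eq_zero_or_pos c.2 with h0 | h0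
    · exact Or.inl h0
    · refine Or.inr ?_
      rw [mem_eraseT h]
      refine ⟨?_, by rw [mem_iff']; simp only []; omega⟩
      intro he; exact absurd (congrArg Prod.snd he) (by omega)
  · rcases Nat.eq_zero_or_pos c.1 with h0 | h0
    · exact Or.inl h0
    · refine Or.inr ?_
      have e1 : (eraseT ν c).rowLen c.1 = c.2 := by
        refine rowLen_eq_of_s19 (by rw [mem_eraseT h]; simp) ?_
        rcases Nat.eq_zero_or_pos c.2 with h2 | h2
        · exact Or.inl h2
        · refine Or.inr ?_
          rw [mem_eraseT h]
          refine ⟨?_, by rw [mem_iff']; simp only []; omega⟩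
          intro he; exact absurd (congrArg Prod.snd he) (by omega)
      have e2 : (eraseT ν c).rowLen (c.1 - 1) = ν.rowLen (c.1 - 1) := by
        refine rowLen_eq_of_s19 ?_ ?_
        · rw [mem_eraseT h]
          push_neg
          intro _
          rw [mem_iff_lt_rowLen]
          omega
        · rcases Nat.eq_zero_or_pos (ν.rowLen (c.1 - 1)) with h2 | h2
          · exact Or.inl h2
          · refine Or.inr ?_
            rw [mem_eraseT h]
            refine ⟨?_, by rw [mem_iff_lt_rowLen]; omega⟩
            intro he; exact absurd (congrArg Prod.fst he) (by omega)
      rw [e1, e2]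
      have h3 : ν.rowLen c.1 ≤ ν.rowLen (c.1 - 1) := ν.rowLen_anti _ _ (by omega)
      omega

theorem addT_eraseT {ν : YoungDiagram} {c : ℕ × ℕ} (h : Removable ν c) :
    addT (eraseT ν c) c = ν := by
  apply yd_ext
  rw [cells_addT (addable_eraseT h), cells_eraseT h,
    Finset.insert_erase (by rw [mem_cells]; exact h.1)]

/-- Classification: a diagram one cell larger comes from `addT`. -/
theorem exists_addable_of_le {ν ξ : YoungDiagram} (hle : ν ≤ ξ) (hcard : ξ.card = ν.card + 1) :
    ∃ c, Addable ν c ∧ ξ = addT ν c := by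
  rw [← cells_subset_iff] at hle
  have hcard' : ξ.cells.card = ν.cells.card + 1 := hcard
  have h1 : (ξ.cells \ ν.cells).card = 1 := by
    rw [Finset.card_sdiff_of_subset hle]; omega
  rw [Finset.card_eq_one] at h1
  obtain ⟨c, hc⟩ := h1
  have hcm : c ∈ ξ.cells ∧ c ∉ ν.cells := by
    have : c ∈ ξ.cells \ ν.cells := hc ▸ Finset.mem_singleton_self c
    exact ⟨(Finset.mem_sdiff.mp this).1, (Finset.mem_sdiff.mp this).2⟩
  have hcells : ξ.cells = insert c ν.cells := by
    apply Finset.eq_of_subset_of_card_le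
    · intro x hx
      by_cases hxc : x ∈ ν.cells
      · exact Finset.mem_insert_of_mem hxc
      · have hxs : x ∈ ξ.cells \ ν.cells := Finset.mem_sdiff.mpr ⟨hx, hxc⟩
        rw [hc, Finset.mem_singleton] at hxs
        rw [hxs]
        exact Finset.mem_insert_self c _
    · rw [Finset.card_insert_of_notMem hcm.2]; omega
  have hsub : ∀ x : ℕ × ℕ, x ∈ ξ → x ≠ c → x ∈ ν := by
    intro x hx hne
    have : x ∈ ξ.cells := by rwa [mem_cells]
    rw [hcells, Finset.mem_insert] at this
    rcases this with rfl | h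
    · exact absurd rfl hne
    · rwa [← mem_cells]
  have hcmem : c ∈ ξ := by rw [← mem_cells]; exact hcm.1
  have hcnmem : c ∉ ν := by rw [← mem_cells]; exact hcm.2
  have hadd : Addable ν c := by
    constructor
    · refine (rowLen_eq_of_s19 hcnmem ?_).symm
      rcases Nat.eq_zero_or_pos c.2 with h0 | h0
      · exact Or.inl h0
      · refine Or.inr (hsub _ (ξ.up_left_mem (le_refl _) (by omega) hcmem) ?_)
        intro he; exact absurd (congrArg Prod.snd he) (by omega)
    · rcases Nat.eq_zero_or_pos c.1 with h0 | h0
      · exact Or.inl h0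
      · refine Or.inr ?_
        have hmem : (c.1 - 1, c.2) ∈ ν := by
          refine hsub _ (ξ.up_left_mem (by omega) (le_refl _) hcmem) ?_
          intro he; exact absurd (congrArg Prod.fst he) (by omega)
        rw [mem_iff_lt_rowLen] at hmem
        have : c.2 = ν.rowLen c.1 := by
          refine (rowLen_eq_of_s19 hcnmem ?_).symm
          rcases Nat.eq_zero_or_pos c.2 with h2 | h2
          · exact Or.inl h2
          · refine Or.inr (hsub _ (ξ.up_left_mem (le_refl _) (by omega) hcmem) ?_)
            intro he; exact absurd (congrArg Prod.snd he) (by omega)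
        omega
  exact ⟨c, hadd, yd_ext (by rw [cells_addT hadd, hcells])⟩

/-- Classification: a diagram one cell smaller comes from `eraseT`. -/
theorem exists_removable_of_le {κ ν : YoungDiagram} (hle : κ ≤ ν) (hcard : ν.card = κ.card + 1) :
    ∃ c, Removable ν c ∧ κ = eraseT ν c := by
  obtain ⟨c, hc, rfl⟩ := exists_addable_of_le hle hcard
  exact ⟨c, removable_addT hc, (eraseT_addT hc).symm⟩

theorem addT_injective {ν : YoungDiagram} {c c' : ℕ × ℕ} (h : Addable ν c) (h' : Addable ν c')
    (he : addT ν c = addT ν c') : c = c' := by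
  have : c ∈ addT ν c' := by rw [← he, mem_addT h]; exact Or.inl rfl
  rw [mem_addT h'] at this
  rcases this with h1 | h1
  · exact h1
  · exact absurd h1 (addable_notMem h)

/-! ### Counting corners of a single diagram -/
open YoungDiagram Finset

def addRows (ν : YoungDiagram) : Finset ℕ :=
  (Finset.range (ν.colLen 0 + 1)).filter (fun r => r = 0 ∨ ν.rowLen r < ν.rowLen (r - 1))

def remRows (ν : YoungDiagram) : Finset ℕ :=
  (Finset.range (ν.colLen 0)).filter (fun r => ν.rowLen (r + 1) < ν.rowLen r)

def addables (ν : YoungDiagram) : Finset (ℕ × ℕ) :=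
  (addRows ν).image (fun r => (r, ν.rowLen r))

def removables (ν : YoungDiagram) : Finset (ℕ × ℕ) :=
  (remRows ν).image (fun r => (r, ν.rowLen r - 1))

theorem rowLen_pos_iff {ν : YoungDiagram} {r : ℕ} : 0 < ν.rowLen r ↔ r < ν.colLen 0 := by
  rw [← mem_iff_lt_colLen, mem_iff_lt_rowLen]

theorem mem_addables {ν : YoungDiagram} {c : ℕ × ℕ} : c ∈ addables ν ↔ Addable ν c := by
  constructor
  · intro hc
    simp only [addables, Finset.mem_image] at hc
    obtain ⟨r, hr, rfl⟩ := hc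
    simp only [addRows, Finset.mem_filter, Finset.mem_range] at hr
    exact ⟨rfl, hr.2⟩
  · intro hc
    obtain ⟨h1, h2⟩ := hc
    simp only [addables, Finset.mem_image]
    refine ⟨c.1, ?_, by rw [← h1]⟩
    simp only [addRows, Finset.mem_filter, Finset.mem_range]
    refine ⟨?_, h2⟩
    rcases h2 with h2 | h2
    · omega
    · have : 0 < ν.rowLen (c.1 - 1) := by omega
      rw [rowLen_pos_iff] at this
      omega

theorem mem_removables {ν : YoungDiagram} {c : ℕ × ℕ} : c ∈ removables ν ↔ Removable ν c := by
  rw [removable_iff]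
  constructor
  · intro hc
    simp only [removables, Finset.mem_image] at hc
    obtain ⟨r, hr, rfl⟩ := hc
    simp only [remRows, Finset.mem_filter, Finset.mem_range] at hr
    obtain ⟨hr1, hr2⟩ := hr
    rw [← rowLen_pos_iff] at hr1
    constructor <;> simp <;> omega
  · intro hc
    obtain ⟨h1, h2⟩ := hc
    simp only [removables, Finset.mem_image]
    refine ⟨c.1, ?_, ?_⟩
    · simp only [remRows, Finset.mem_filter, Finset.mem_range]
      constructor
      · rw [← rowLen_pos_iff]; omega
      · omega
    · have : ν.rowLen c.1 - 1 = c.2 := by omega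
      rw [this]

theorem card_addRows (ν : YoungDiagram) : (addRows ν).card = (remRows ν).card + 1 := by
  have h : addRows ν = insert 0 ((remRows ν).image (· + 1)) := by
    ext x
    simp only [addRows, remRows, Finset.mem_insert, Finset.mem_image, Finset.mem_filter,
      Finset.mem_range]
    constructor
    · rintro ⟨hx, rfl | hx2⟩
      · exact Or.inl rfl
      · rcases Nat.eq_zero_or_pos x with rfl | hpos
        · exact Or.inl rfl
        · refine Or.inr ⟨x - 1, ⟨?_, ?_⟩, by omega⟩
          · omega
          · have : x - 1 + 1 = x := by omega
            rw [this]; exact hx2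
    · rintro (rfl | ⟨r, ⟨hr1, hr2⟩, rfl⟩)
      · exact ⟨by omega, Or.inl rfl⟩
      · exact ⟨by omega, Or.inr (by simpa using hr2)⟩
  rw [h, Finset.card_insert_of_notMem (by simp), Finset.card_image_of_injective _
    (fun a b hab => by omega)]

theorem card_addables (ν : YoungDiagram) : (addables ν).card = (removables ν).card + 1 := by
  rw [addables, removables, Finset.card_image_of_injOn (fun a _ b _ hab => congrArg Prod.fst hab),
    Finset.card_image_of_injOn (fun a _ b _ hab => congrArg Prod.fst hab), card_addRows]

/-! ### Shapes: m-tuples of Young diagrams -/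
open YoungDiagram Finset Function

variable {m : ℕ}

abbrev Shape (m : ℕ) := Fin m → YoungDiagram

def size (μ : Shape m) : ℕ := ∑ k, (μ k).card

theorem size_update (μ : Shape m) (j : Fin m) (ν : YoungDiagram) :
    size (update μ j ν) + (μ j).card = size μ + ν.card := by
  unfold size
  rw [← Finset.add_sum_erase _ _ (Finset.mem_univ j),
    ← Finset.add_sum_erase _ (fun k => (μ k).card) (Finset.mem_univ j)]
  have : ∑ k ∈ Finset.univ.erase j, (update μ j ν k).card
      = ∑ k ∈ Finset.univ.erase j, (μ k).card := by
    apply Finset.sum_congr rfl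
    intro k hk
    rw [update_apply, if_neg (Finset.mem_erase.mp hk).1]
  rw [this, update_self]
  ring

theorem shape_eq_of_le_size {μ ν : Shape m} (hle : ∀ k, μ k ≤ ν k) (hs : size ν ≤ size μ) :
    μ = ν := by
  have hc : ∀ k : Fin m, (μ k).card ≤ (ν k).card := fun k =>
    Finset.card_le_card (cells_subset_iff.mpr (hle k))
  have := (Finset.sum_eq_sum_iff_of_le (fun k _ => hc k)).mp
    (le_antisymm (Finset.sum_le_sum (fun k _ => hc k)) hs)
  funext k
  exact yd_ext (Finset.eq_of_subset_of_card_le (cells_subset_iff.mpr (hle k))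
    (le_of_eq (this k (Finset.mem_univ k)).symm))

/-- `a`-nodes addable to / removable from a shape. -/
def addNodes (μ : Shape m) : Finset (Fin m × ℕ × ℕ) :=
  Finset.univ.biUnion (fun k => (addables (μ k)).image (fun c => (k, c)))

def remNodes (μ : Shape m) : Finset (Fin m × ℕ × ℕ) :=
  Finset.univ.biUnion (fun k => (removables (μ k)).image (fun c => (k, c)))

theorem mem_addNodes {μ : Shape m} {a : Fin m × ℕ × ℕ} :
    a ∈ addNodes μ ↔ Addable (μ a.1) a.2 := by
  simp only [addNodes, Finset.mem_biUnion, Finset.mem_univ, true_and, Finset.mem_image]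
  constructor
  · rintro ⟨k, c, hc, rfl⟩; exact mem_addables.mp hc
  · intro h; exact ⟨a.1, a.2, mem_addables.mpr h, rfl⟩

theorem mem_remNodes {μ : Shape m} {a : Fin m × ℕ × ℕ} :
    a ∈ remNodes μ ↔ Removable (μ a.1) a.2 := by
  simp only [remNodes, Finset.mem_biUnion, Finset.mem_univ, true_and, Finset.mem_image]
  constructor
  · rintro ⟨k, c, hc, rfl⟩; exact mem_removables.mp hc
  · intro h; exact ⟨a.1, a.2, mem_removables.mpr h, rfl⟩

theorem card_addNodes (μ : Shape m) : (addNodes μ).card = (remNodes μ).card + m := by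
  have hdis : ∀ s : Finset (Fin m), ∀ F : Fin m → Finset (ℕ × ℕ),
      ((s.biUnion fun k => (F k).image fun c => (k, c)).card = ∑ k ∈ s, (F k).card) := by
    intro s F
    rw [Finset.card_biUnion]
    · apply Finset.sum_congr rfl
      intro k _
      exact Finset.card_image_of_injOn (fun a _ b _ hab => congrArg Prod.snd hab)
    · intro x _ y _ hxy
      simp only [Finset.disjoint_left, Finset.mem_image]
      rintro a ⟨c, _, rfl⟩ ⟨d, _, hd⟩
      exact hxy (congrArg Prod.fst hd).symm
  rw [addNodes, remNodes, hdis, hdis]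
  rw [Finset.sum_congr rfl (fun k _ => card_addables (μ k)), Finset.sum_add_distrib]
  simp [Finset.card_univ]

/-- Adding / removing a node from a shape. -/
def addNode (μ : Shape m) (a : Fin m × ℕ × ℕ) : Shape m := update μ a.1 (addT (μ a.1) a.2)

def remNode (μ : Shape m) (a : Fin m × ℕ × ℕ) : Shape m := update μ a.1 (eraseT (μ a.1) a.2)

theorem size_addNode {μ : Shape m} {a : Fin m × ℕ × ℕ} (h : a ∈ addNodes μ) :
    size (addNode μ a) = size μ + 1 := by
  have := size_update μ a.1 (addT (μ a.1) a.2)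
  rw [card_addT (mem_addNodes.mp h)] at this
  unfold addNode
  omega

theorem size_remNode {μ : Shape m} {a : Fin m × ℕ × ℕ} (h : a ∈ remNodes μ) :
    size μ = size (remNode μ a) + 1 := by
  have := size_update μ a.1 (eraseT (μ a.1) a.2)
  have h2 := card_eraseT (mem_remNodes.mp h)
  unfold remNode
  omega

/-- The cover relation on shapes. -/
def Covers (κ μ : Shape m) : Prop := (∀ k, κ k ≤ μ k) ∧ size μ = size κ + 1

theorem covers_addNode {μ : Shape m} {a : Fin m × ℕ × ℕ} (h : a ∈ addNodes μ) :
    Covers μ (addNode μ a) := by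
  refine ⟨fun k => ?_, size_addNode h⟩
  unfold addNode
  rcases eq_or_ne k a.1 with rfl | hne
  · rw [update_self]; exact le_addT (mem_addNodes.mp h)
  · rw [update_apply, if_neg hne]

theorem covers_remNode {μ : Shape m} {a : Fin m × ℕ × ℕ} (h : a ∈ remNodes μ) :
    Covers (remNode μ a) μ := by
  refine ⟨fun k => ?_, size_remNode h⟩
  unfold remNode
  rcases eq_or_ne k a.1 with rfl | hne
  · rw [update_self]; exact eraseT_le (mem_remNodes.mp h)
  · rw [update_apply, if_neg hne]

/-- Classification of covers via `addNode`. -/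
theorem covers_iff_addNode {μ l : Shape m} :
    Covers μ l ↔ ∃ a ∈ addNodes μ, l = addNode μ a := by
  constructor
  · rintro ⟨hle, hsize⟩
    have hc : ∀ k : Fin m, (μ k).card ≤ (l k).card := fun k =>
      Finset.card_le_card (cells_subset_iff.mpr (hle k))
    -- find the component that grows
    have hex : ∃ j : Fin m, (μ j).card < (l j).card := by
      by_contra hno
      push_neg at hno
      have hls : size l ≤ size μ := Finset.sum_le_sum (fun k _ => hno k)
      omega
    obtain ⟨j, hj⟩ := hex
    have hothers : ∀ k, k ≠ j → (l k).card = (μ k).card := by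
      intro k hk
      by_contra hne
      have h2 : (μ k).card + 1 ≤ (l k).card := by
        have := hc k; omega
      -- sum bound
      have hsum : size μ + 2 ≤ size l := by
        unfold size
        have h3 : ∀ i : Fin m, (μ i).card + (if i = j then 1 else 0) + (if i = k then 1 else 0)
            ≤ (l i).card := by
          intro i
          by_cases h4 : i = j <;> by_cases h5 : i = k <;> simp_all <;> omega
        calc ∑ i, (μ i).card + 2
            = ∑ i, ((μ i).card + (if i = j then 1 else 0) + (if i = k then 1 else 0)) := by
              rw [Finset.sum_add_distrib, Finset.sum_add_distrib]
              simp [Finset.sum_ite_eq']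
          _ ≤ ∑ i, (l i).card := Finset.sum_le_sum (fun i _ => h3 i)
      omega
    have hcardj : (l j).card = (μ j).card + 1 := by
      have hsum : size l = size μ + ((l j).card - (μ j).card) := by
        unfold size
        rw [← Finset.add_sum_erase _ (fun k => (l k).card) (Finset.mem_univ j),
          ← Finset.add_sum_erase _ (fun k => (μ k).card) (Finset.mem_univ j)]
        rw [Finset.sum_congr rfl (fun k hk => hothers k (Finset.mem_erase.mp hk).1)]
        have := hc j
        omega
      omega
    obtain ⟨c, hc, hlc⟩ := exists_addable_of_le (hle j) hcardj
    refine ⟨(j, c), mem_addNodes.mpr hc, ?_⟩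
    funext k
    unfold addNode
    rcases eq_or_ne k j with rfl | hne
    · rw [update_self]; exact hlc
    · rw [update_apply, if_neg hne]
      exact (yd_ext (Finset.eq_of_subset_of_card_le (cells_subset_iff.mpr (hle k))
        (le_of_eq (hothers k hne)))).symm
  · rintro ⟨a, ha, rfl⟩
    exact covers_addNode ha

theorem remNode_addNode {μ : Shape m} {a : Fin m × ℕ × ℕ} (h : a ∈ addNodes μ) :
    remNode (addNode μ a) a = μ := by
  funext k
  unfold remNode addNode
  rcases eq_or_ne k a.1 with rfl | hne
  · rw [update_self, update_self, eraseT_addT (mem_addNodes.mp h)]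
  · rw [update_apply, if_neg hne, update_apply, if_neg hne]

theorem addNode_remNode {μ : Shape m} {a : Fin m × ℕ × ℕ} (h : a ∈ remNodes μ) :
    addNode (remNode μ a) a = μ := by
  funext k
  unfold remNode addNode
  rcases eq_or_ne k a.1 with rfl | hne
  · rw [update_self, update_self, addT_eraseT (mem_remNodes.mp h)]
  · rw [update_apply, if_neg hne, update_apply, if_neg hne]

theorem mem_remNodes_addNode {μ : Shape m} {a : Fin m × ℕ × ℕ} (h : a ∈ addNodes μ) :
    a ∈ remNodes (addNode μ a) := by
  rw [mem_remNodes]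
  unfold addNode
  rw [update_self]
  exact removable_addT (mem_addNodes.mp h)

theorem mem_addNodes_remNode {μ : Shape m} {a : Fin m × ℕ × ℕ} (h : a ∈ remNodes μ) :
    a ∈ addNodes (remNode μ a) := by
  rw [mem_addNodes]
  unfold remNode
  rw [update_self]
  exact addable_eraseT (mem_remNodes.mp h)

/-- Classification of covers via `remNode`. -/
theorem covers_iff_remNode {κ μ : Shape m} :
    Covers κ μ ↔ ∃ a ∈ remNodes μ, κ = remNode μ a := by
  constructor
  · intro h
    obtain ⟨a, ha, rfl⟩ := covers_iff_addNode.mp h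
    exact ⟨a, mem_remNodes_addNode ha, (remNode_addNode ha).symm⟩
  · rintro ⟨a, ha, rfl⟩
    exact covers_remNode ha

/-- Finsets of upper and lower covers. -/
def upF (μ : Shape m) : Finset (Shape m) := (addNodes μ).image (addNode μ)

def downF (μ : Shape m) : Finset (Shape m) := (remNodes μ).image (remNode μ)

theorem mem_upF {μ l : Shape m} : l ∈ upF μ ↔ Covers μ l := by
  rw [upF, Finset.mem_image, covers_iff_addNode]
  constructor
  · rintro ⟨a, ha, rfl⟩; exact ⟨a, ha, rfl⟩
  · rintro ⟨a, ha, rfl⟩; exact ⟨a, ha, rfl⟩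

theorem mem_downF {μ κ : Shape m} : κ ∈ downF μ ↔ Covers κ μ := by
  rw [downF, Finset.mem_image, covers_iff_remNode]
  constructor
  · rintro ⟨a, ha, rfl⟩; exact ⟨a, ha, rfl⟩
  · rintro ⟨a, ha, rfl⟩; exact ⟨a, ha, rfl⟩

theorem addNode_injOn {μ : Shape m} {a b : Fin m × ℕ × ℕ} (ha : a ∈ addNodes μ)
    (hb : b ∈ addNodes μ) (hab : addNode μ a = addNode μ b) : a = b := by
  have h1 : a.1 = b.1 := by
    by_contra hne
    have := congrFun hab a.1
    unfold addNode at this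
    rw [update_self, update_apply, if_neg hne] at this
    have hcard := card_addT (mem_addNodes.mp ha)
    rw [this] at hcard
    omega
  have h2 : a.2 = b.2 := by
    have hthis := congrFun hab a.1
    unfold addNode at hthis
    rw [update_self, h1, update_self] at hthis
    have ha' : Addable (μ b.1) a.2 := h1 ▸ mem_addNodes.mp ha
    exact addT_injective ha' (mem_addNodes.mp hb) hthis
  exact Prod.ext h1 h2

theorem remNode_injOn {μ : Shape m} {a b : Fin m × ℕ × ℕ} (ha : a ∈ remNodes μ)
    (hb : b ∈ remNodes μ) (hab : remNode μ a = remNode μ b) : a = b := by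
  have h1 : addNode (remNode μ a) a = addNode (remNode μ b) b := by
    rw [addNode_remNode ha, addNode_remNode hb]
  have h2 := mem_addNodes_remNode ha
  have h3 := mem_addNodes_remNode hb
  rw [hab] at h2 h1
  exact addNode_injOn h2 h3 h1

theorem card_upF (μ : Shape m) : (upF μ).card = (remNodes μ).card + m := by
  rw [upF, Finset.card_image_of_injOn (fun a ha b hb => addNode_injOn ha hb), ← card_addNodes]

theorem card_downF (μ : Shape m) : (downF μ).card = (remNodes μ).card := by
  rw [downF, Finset.card_image_of_injOn (fun a ha b hb => remNode_injOn ha hb)]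

/-- Componentwise union and intersection of shapes. -/
def supS (μ ν : Shape m) : Shape m := fun k => μ k ⊔ ν k

def infS (μ ν : Shape m) : Shape m := fun k => μ k ⊓ ν k

theorem size_supS_add_size_infS (μ ν : Shape m) :
    size (supS μ ν) + size (infS μ ν) = size μ + size ν := by
  unfold size supS infS
  rw [← Finset.sum_add_distrib, ← Finset.sum_add_distrib]
  apply Finset.sum_congr rfl
  intro k _
  show ((μ k ⊔ ν k).cells).card + ((μ k ⊓ ν k).cells).card = _
  rw [cells_sup, cells_inf]
  exact Finset.card_union_add_card_inter _ _

theorem size_mono {μ ν : Shape m} (h : ∀ k, μ k ≤ ν k) : size μ ≤ size ν :=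
  Finset.sum_le_sum (fun k _ => Finset.card_le_card (cells_subset_iff.mpr (h k)))

/-- If `l` covers two distinct shapes `μ ν` of equal size, then `l = supS μ ν` and
`infS μ ν` is covered by both. -/
theorem common_cover {μ ν l : Shape m} (hμ : Covers μ l) (hν : Covers ν l) (hne : μ ≠ ν) :
    l = supS μ ν ∧ Covers (infS μ ν) μ ∧ Covers (infS μ ν) ν := by
  have hsz : size ν = size μ := by have := hμ.2; have := hν.2; omega
  have hsup_le : ∀ k, supS μ ν k ≤ l k := fun k => sup_le (hμ.1 k) (hν.1 k)
  have hle1 : ∀ k, μ k ≤ supS μ ν k := fun k => le_sup_left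
  have h1 : size μ < size (supS μ ν) := by
    rcases lt_or_ge (size μ) (size (supS μ ν)) with h | h
    · exact h
    · exfalso
      have heq : μ = supS μ ν := shape_eq_of_le_size hle1 h
      have hνμ : ∀ k, ν k ≤ μ k := fun k => by
        conv_rhs => rw [heq]
        exact le_sup_right
      exact hne (shape_eq_of_le_size hνμ (le_of_eq hsz.symm)).symm
  have h2 : size (supS μ ν) ≤ size l := size_mono hsup_le
  have h3 : size (supS μ ν) = size μ + 1 := by
    have := hμ.2
    omega
  have h4 : l = supS μ ν := by
    have hl2 := hμ.2
    have := shape_eq_of_le_size hsup_le (by omega)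
    exact this.symm
  have h5 := size_supS_add_size_infS μ ν
  refine ⟨h4, ⟨fun k => inf_le_left, by omega⟩, ⟨fun k => inf_le_right, by omega⟩⟩

/-- If `κ` is covered by two distinct shapes `μ ν` of equal size, then `κ = infS μ ν`
and `supS μ ν` covers both. -/
theorem common_cocover {μ ν κ : Shape m} (hμ : Covers κ μ) (hν : Covers κ ν) (hne : μ ≠ ν) :
    κ = infS μ ν ∧ Covers μ (supS μ ν) ∧ Covers ν (supS μ ν) := by
  have hsz : size ν = size μ := by have := hμ.2; have := hν.2; omega
  have hκ_le : ∀ k, κ k ≤ infS μ ν k := fun k => le_inf (hμ.1 k) (hν.1 k)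
  have hinf_le : ∀ k, infS μ ν k ≤ μ k := fun k => inf_le_left
  have h1 : size (infS μ ν) < size μ := by
    rcases lt_or_ge (size (infS μ ν)) (size μ) with h | h
    · exact h
    · exfalso
      have heq : infS μ ν = μ := shape_eq_of_le_size hinf_le h
      have hμν : ∀ k, μ k ≤ ν k := fun k => by
        conv_lhs => rw [← heq]
        exact inf_le_right
      exact hne (shape_eq_of_le_size hμν (le_of_eq hsz))
  have h2 : size κ ≤ size (infS μ ν) := size_mono hκ_le
  have h3 : κ = infS μ ν := shape_eq_of_le_size hκ_le (by have := hμ.2; omega)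
  have h5 := size_supS_add_size_infS μ ν
  have h6 : size (infS μ ν) = size κ := by rw [h3]
  have h7 := hμ.2
  refine ⟨h3, ⟨fun k => le_sup_left, by omega⟩, ⟨fun k => le_sup_right, by omega⟩⟩

/-! ### Standard tableaux: recursion by removing the largest entry -/
open YoungDiagram Finset Function

variable {m n : ℕ}

theorem card_biUnion_tag (F : Fin m → Finset (ℕ × ℕ)) :
    ((Finset.univ.biUnion fun k => (F k).image fun c => (k, c)).card = ∑ k, (F k).card) := by
  rw [Finset.card_biUnion]
  · exact Finset.sum_congr rfl fun k _ =>
      Finset.card_image_of_injOn (fun a _ b _ hab => congrArg Prod.snd hab)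
  · intro x _ y _ hxy
    simp only [Finset.disjoint_left, Finset.mem_image]
    rintro a ⟨c, _, rfl⟩ ⟨d, _, hd⟩
    exact hxy (congrArg Prod.fst hd).symm

/-- All nodes of a shape. -/
def nodes (μ : Shape m) : Finset (MNode m) :=
  Finset.univ.biUnion fun k => (μ k).cells.image fun c => (k, c)

theorem mem_nodes {μ : Shape m} {b : MNode m} : b ∈ nodes μ ↔ b.2 ∈ μ b.1 := by
  simp only [nodes, Finset.mem_biUnion, Finset.mem_univ, true_and, Finset.mem_image]
  constructor
  · rintro ⟨k, c, hc, rfl⟩; rwa [← mem_cells]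
  · intro h; exact ⟨b.1, b.2, by rwa [mem_cells], rfl⟩

theorem card_nodes (μ : Shape m) : (nodes μ).card = size μ :=
  card_biUnion_tag _

instance finite_stdTab (μ : Shape m) : Finite (StdTab m n μ) := by
  have hmem : ∀ X : StdTab m n μ, ∀ i, X.val i ∈ nodes μ := fun X i =>
    mem_nodes.mpr (X.2.1 i)
  have hf : Function.Injective
      (fun (X : StdTab m n μ) (i : Fin n) => (⟨X.val i, hmem X i⟩ : {b // b ∈ nodes μ})) := by
    intro X Y hXY
    apply Subtype.ext
    funext i
    exact congrArg Subtype.val (congrFun hXY i)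
  exact Finite.of_injective _ hf

instance unique_stdTab_zero (μ : Shape m) : Unique (StdTab m 0 μ) := by
  refine ⟨⟨⟨fun i => i.elim0, fun i => i.elim0, fun i => i.elim0,
    fun i => i.elim0, fun i => i.elim0⟩⟩, ?_⟩
  intro X
  apply Subtype.ext
  funext i
  exact i.elim0

theorem card_stdTab_zero (μ : Shape m) : Nat.card (StdTab m 0 μ) = 1 :=
  Nat.card_unique

/-- A standard tableau of full shape hits every node. -/
theorem stdtab_surj {μ : Shape m} (h : size μ = n) (X : StdTab m n μ) :
    ∀ b ∈ nodes μ, ∃ i, X.val i = b := by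
  have himg : Finset.univ.image X.val = nodes μ := by
    apply Finset.eq_of_subset_of_card_le
    · intro b hb
      obtain ⟨i, _, rfl⟩ := Finset.mem_image.mp hb
      exact mem_nodes.mpr (X.2.1 i)
    · rw [Finset.card_image_of_injective _ X.2.2.1, card_nodes, h, Finset.card_univ,
        Fintype.card_fin]
  intro b hb
  rw [← himg] at hb
  obtain ⟨i, _, hi⟩ := Finset.mem_image.mp hb
  exact ⟨i, hi⟩

/-- The node of the largest entry is removable. -/
theorem last_removable {μ : Shape m} (h : size μ = n + 1) (X : StdTab m (n + 1) μ) :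
    X.val (Fin.last n) ∈ remNodes μ := by
  obtain ⟨hmem, hinj, hrow, hcol⟩ := X.2
  rw [mem_remNodes]
  refine ⟨hmem (Fin.last n), ?_, ?_⟩
  · intro hcon
    have hmm : (((X.val (Fin.last n)).1,
        ((X.val (Fin.last n)).2.1 + 1, (X.val (Fin.last n)).2.2))
        : MNode m) ∈ nodes μ := mem_nodes.mpr hcon
    obtain ⟨j, hj⟩ := stdtab_surj h X _ hmm
    have hlt := hcol (Fin.last n) j (by rw [hj]) (by rw [hj]) (by rw [hj]; simp)
    exact absurd hlt (not_lt.mpr (Fin.le_last j))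
  · intro hcon
    have hmm : (((X.val (Fin.last n)).1,
        ((X.val (Fin.last n)).2.1, (X.val (Fin.last n)).2.2 + 1))
        : MNode m) ∈ nodes μ := mem_nodes.mpr hcon
    obtain ⟨j, hj⟩ := stdtab_surj h X _ hmm
    have hlt := hrow (Fin.last n) j (by rw [hj]) (by rw [hj]) (by rw [hj]; simp)
    exact absurd hlt (not_lt.mpr (Fin.le_last j))

theorem mem_remNode_iff {μ : Shape m} {a : MNode m} (ha : a ∈ remNodes μ) {b : MNode m} :
    b.2 ∈ remNode μ a b.1 ↔ b ≠ a ∧ b.2 ∈ μ b.1 := by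
  unfold remNode
  rcases eq_or_ne b.1 a.1 with h1 | h1
  · constructor
    · intro h2
      rw [h1, update_self, mem_eraseT (mem_remNodes.mp ha)] at h2
      obtain ⟨hne, hmem⟩ := h2
      exact ⟨fun he => hne (congrArg Prod.snd he), by rw [h1]; exact hmem⟩
    · rintro ⟨hne, hmem⟩
      rw [h1, update_self, mem_eraseT (mem_remNodes.mp ha)]
      exact ⟨fun he => hne (Prod.ext h1 he), by rw [← h1]; exact hmem⟩
  · rw [update_apply, if_neg h1]
    exact ⟨fun h2 => ⟨fun he => h1 (by rw [he]), h2⟩, fun h2 => h2.2⟩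

/-- The fiber over a removable node is equivalent to tableaux of the smaller shape. -/
def fiberEquiv (μ : Shape m) (a : MNode m) (ha : a ∈ remNodes μ) :
    {X : StdTab m (n + 1) μ // X.val (Fin.last n) = a} ≃ StdTab m n (remNode μ a) where
  toFun X := by
    refine ⟨X.val.val ∘ Fin.castSucc, ?_, ?_, ?_, ?_⟩
    · intro i
      show (X.val.val (Fin.castSucc i)).2 ∈ remNode μ a (X.val.val (Fin.castSucc i)).1
      rw [mem_remNode_iff ha]
      refine ⟨?_, X.val.2.1 _⟩
      intro he
      have hinj := X.val.2.2.1 (he.trans X.2.symm)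
      exact absurd hinj (Fin.ne_of_lt (Fin.castSucc_lt_last i))
    · intro i j hij
      exact Fin.castSucc_injective n (X.val.2.2.1 hij)
    · intro i j h1 h2 h3
      have := X.val.2.2.2.1 _ _ h1 h2 h3
      rwa [Fin.castSucc_lt_castSucc_iff] at this
    · intro i j h1 h2 h3
      have := X.val.2.2.2.2 _ _ h1 h2 h3
      rwa [Fin.castSucc_lt_castSucc_iff] at this
  invFun Z := by
    have hZrem : ∀ i, (Z.val i).2 ∈ remNode μ a (Z.val i).1 := fun i => Z.2.1 i
    have hZne : ∀ i, Z.val i ≠ a := fun i => ((mem_remNode_iff ha).mp (hZrem i)).1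
    have hZmem : ∀ i, (Z.val i).2 ∈ μ (Z.val i).1 := fun i =>
      ((mem_remNode_iff ha).mp (hZrem i)).2
    have hra := mem_remNodes.mp ha
    refine ⟨⟨Fin.snoc Z.val a, ?_, ?_, ?_, ?_⟩, by simp⟩
    · intro i
      induction i using Fin.lastCases with
      | last =>
        simp only [Fin.snoc_last]
        exact hra.1
      | cast j =>
        simp only [Fin.snoc_castSucc]
        exact hZmem j
    · intro i j hij
      induction i using Fin.lastCases with
      | last =>
        induction j using Fin.lastCases with
        | last => rfl
        | cast j' =>
          rw [Fin.snoc_last, Fin.snoc_castSucc] at hij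
          exact absurd hij.symm (hZne j')
      | cast i' =>
        induction j using Fin.lastCases with
        | last =>
          rw [Fin.snoc_last, Fin.snoc_castSucc] at hij
          exact absurd hij (hZne i')
        | cast j' =>
          rw [Fin.snoc_castSucc, Fin.snoc_castSucc] at hij
          exact congrArg Fin.castSucc (Z.2.2.1 hij)
    · intro i j h1 h2 h3
      induction j using Fin.lastCases with
      | last =>
        induction i using Fin.lastCases with
        | last => rw [Fin.snoc_last] at h3; exact absurd h3 (lt_irrefl _)
        | cast i' => exact Fin.castSucc_lt_last i'
      | cast j' =>
        induction i using Fin.lastCases with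
        | last =>
          exfalso
          rw [Fin.snoc_last] at h1 h2 h3
          rw [Fin.snoc_castSucc] at h1 h2 h3
          apply hra.2.2
          have hm := hZmem j'
          rw [← h1] at hm
          exact (μ a.1).up_left_mem (le_of_eq h2) (Nat.succ_le_of_lt h3) hm
        | cast i' =>
          simp only [Fin.snoc_castSucc] at h1 h2 h3
          exact Fin.castSucc_lt_castSucc_iff.mpr (Z.2.2.2.1 _ _ h1 h2 h3)
    · intro i j h1 h2 h3
      induction j using Fin.lastCases with
      | last =>
        induction i using Fin.lastCases with
        | last => rw [Fin.snoc_last] at h3; exact absurd h3 (lt_irrefl _)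
        | cast i' => exact Fin.castSucc_lt_last i'
      | cast j' =>
        induction i using Fin.lastCases with
        | last =>
          exfalso
          rw [Fin.snoc_last] at h1 h2 h3
          rw [Fin.snoc_castSucc] at h1 h2 h3
          apply hra.2.1
          have hm := hZmem j'
          rw [← h1] at hm
          exact (μ a.1).up_left_mem (Nat.succ_le_of_lt h3) (le_of_eq h2) hm
        | cast i' =>
          simp only [Fin.snoc_castSucc] at h1 h2 h3
          exact Fin.castSucc_lt_castSucc_iff.mpr (Z.2.2.2.2 _ _ h1 h2 h3)
  left_inv X := by
    apply Subtype.ext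
    apply Subtype.ext
    funext i
    change Fin.snoc (α := fun _ => MNode m) (X.val.val ∘ Fin.castSucc) a i = X.val.val i
    induction i using Fin.lastCases with
    | last => rw [Fin.snoc_last, X.2]
    | cast i' => rw [Fin.snoc_castSucc]; rfl
  right_inv Z := by
    apply Subtype.ext
    funext i
    change Fin.snoc (α := fun _ => MNode m) Z.val a (Fin.castSucc i) = Z.val i
    rw [Fin.snoc_castSucc]

theorem nat_card_sigma {ι : Type*} [Fintype ι] (f : ι → Type*) [∀ i, Finite (f i)] :
    Nat.card (Σ i, f i) = ∑ i, Nat.card (f i) := by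
  haveI : ∀ i, Fintype (f i) := fun i => Fintype.ofFinite _
  simp [Nat.card_eq_fintype_card, Fintype.card_sigma]

theorem card_stdTab_succ {μ : Shape m} (h : size μ = n + 1) :
    Nat.card (StdTab m (n + 1) μ) = ∑ a ∈ remNodes μ, Nat.card (StdTab m n (remNode μ a)) := by
  have e1 : StdTab m (n + 1) μ ≃
      Σ a : {a // a ∈ remNodes μ}, StdTab m n (remNode μ a.val) := by
    refine Equiv.trans (Equiv.sigmaFiberEquiv
      (fun X : StdTab m (n + 1) μ =>
        (⟨X.val (Fin.last n), last_removable h X⟩ : {a // a ∈ remNodes μ}))).symm ?_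
    refine Equiv.sigmaCongrRight fun a => ?_
    refine Equiv.trans (Equiv.subtypeEquivRight fun X => ?_) (fiberEquiv μ a.val a.2)
    rw [Subtype.ext_iff]
  rw [Nat.card_congr e1, nat_card_sigma]
  exact Finset.sum_coe_sort (remNodes μ) (fun a => Nat.card (StdTab m n (remNode μ a)))

/-! ### The commutation identity and the main count -/
open YoungDiagram Finset Function

variable {m : ℕ}

/-- Number of standard tableaux of a shape. -/
def tabCount (μ : Shape m) : ℕ := Nat.card (StdTab m (size μ) μ)

theorem downF_empty_of_size_zero {μ : Shape m} (h : size μ = 0) : downF μ = ∅ := by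
  rw [Finset.eq_empty_iff_forall_notMem]
  intro κ hκ
  have := (mem_downF.mp hκ).2
  omega

theorem tabCount_downF {μ : Shape m} (h : size μ ≠ 0) :
    tabCount μ = ∑ κ ∈ downF μ, tabCount κ := by
  obtain ⟨n, hn⟩ : ∃ n, size μ = n + 1 := ⟨size μ - 1, by omega⟩
  have h1 : tabCount μ = Nat.card (StdTab m (n + 1) μ) := by rw [tabCount, hn]
  rw [h1, card_stdTab_succ hn, downF, Finset.sum_image (fun a ha b hb => remNode_injOn ha hb)]
  apply Finset.sum_congr rfl
  intro a ha
  have hsz : size (remNode μ a) = n := by have := size_remNode ha; omega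
  rw [tabCount, hsz]

/-- The key commutation identity: summing tableau counts over upper covers. -/
theorem key_identity : ∀ N : ℕ, ∀ μ : Shape m, size μ = N →
    ∑ l ∈ upF μ, tabCount l = (size μ + 1) * m * tabCount μ := by
  intro N
  induction N using Nat.strong_induction_on with
  | _ N IH =>
    intro μ hμN
    -- expand each upper cover
    have h1 : ∑ l ∈ upF μ, tabCount l
        = ∑ l ∈ upF μ, (tabCount μ + ∑ ν ∈ (downF l).erase μ, tabCount ν) := by
      apply Finset.sum_congr rfl
      intro l hl
      have hc := mem_upF.mp hl
      rw [tabCount_downF (by have := hc.2; omega)]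
      exact (Finset.add_sum_erase _ _ (mem_downF.mpr hc)).symm
    -- the two cross-term index sets agree
    have hUD : ((upF μ).biUnion (fun l => (downF l).erase μ))
        = ((downF μ).biUnion (fun κ => (upF κ).erase μ)) := by
      ext ν
      simp only [Finset.mem_biUnion, Finset.mem_erase]
      constructor
      · rintro ⟨l, hl, hne, hν⟩
        obtain ⟨-, h2, h3⟩ := common_cover (mem_upF.mp hl) (mem_downF.mp hν) (Ne.symm hne)
        exact ⟨infS μ ν, mem_downF.mpr h2, hne, mem_upF.mpr h3⟩
      · rintro ⟨κ, hκ, hne, hν⟩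
        obtain ⟨-, h2, h3⟩ := common_cocover (mem_downF.mp hκ) (mem_upF.mp hν) (Ne.symm hne)
        exact ⟨supS μ ν, mem_upF.mpr h2, hne, mem_downF.mpr h3⟩
    -- disjointness for the up side
    have hdisU : (↑(upF μ) : Set (Shape m)).PairwiseDisjoint
        (fun l => (downF l).erase μ) := by
      intro l₁ hl₁ l₂ hl₂ hne12
      simp only [Finset.mem_coe] at hl₁ hl₂
      rw [Function.onFun, Finset.disjoint_left]
      intro ν hν₁ hν₂
      rw [Finset.mem_erase] at hν₁ hν₂
      have e1 := (common_cover (mem_upF.mp hl₁) (mem_downF.mp hν₁.2) (Ne.symm hν₁.1)).1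
      have e2 := (common_cover (mem_upF.mp hl₂) (mem_downF.mp hν₂.2) (Ne.symm hν₂.1)).1
      exact hne12 (e1.trans e2.symm)
    have hdisD : (↑(downF μ) : Set (Shape m)).PairwiseDisjoint
        (fun κ => (upF κ).erase μ) := by
      intro κ₁ hκ₁ κ₂ hκ₂ hne12
      simp only [Finset.mem_coe] at hκ₁ hκ₂
      rw [Function.onFun, Finset.disjoint_left]
      intro ν hν₁ hν₂
      rw [Finset.mem_erase] at hν₁ hν₂
      have e1 := (common_cocover (mem_downF.mp hκ₁) (mem_upF.mp hν₁.2) (Ne.symm hν₁.1)).1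
      have e2 := (common_cocover (mem_downF.mp hκ₂) (mem_upF.mp hν₂.2) (Ne.symm hν₂.1)).1
      exact hne12 (e1.trans e2.symm)
    -- cross terms are equal
    have hcross : ∑ l ∈ upF μ, ∑ ν ∈ (downF l).erase μ, tabCount ν
        = ∑ κ ∈ downF μ, ∑ ν ∈ (upF κ).erase μ, tabCount ν := by
      rw [← Finset.sum_biUnion hdisU, ← Finset.sum_biUnion hdisD, hUD]
    -- the down-up double sum via induction
    have hB : ∑ κ ∈ downF μ, ∑ ν ∈ upF κ, tabCount ν = size μ * m * tabCount μ := by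
      rcases Nat.eq_zero_or_pos (size μ) with h0 | h0
      · rw [downF_empty_of_size_zero h0, Finset.sum_empty, h0]
        ring
      · have hstep : ∀ κ ∈ downF μ, ∑ ν ∈ upF κ, tabCount ν = size μ * m * tabCount κ := by
          intro κ hκ
          have hcov := mem_downF.mp hκ
          have hcc := hcov.2
          have hszκ : size κ = N - 1 := by omega
          have := IH (N - 1) (by omega) κ hszκ
          rw [this]
          have he : size κ + 1 = size μ := by omega
          rw [he]
        rw [Finset.sum_congr rfl hstep, ← Finset.mul_sum, ← tabCount_downF (by omega)]
    -- expand B as the diagonal plus cross terms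
    have hB2 : ∑ κ ∈ downF μ, ∑ ν ∈ upF κ, tabCount ν
        = (downF μ).card * tabCount μ + ∑ κ ∈ downF μ, ∑ ν ∈ (upF κ).erase μ, tabCount ν := by
      have : ∀ κ ∈ downF μ, ∑ ν ∈ upF κ, tabCount ν
          = tabCount μ + ∑ ν ∈ (upF κ).erase μ, tabCount ν := by
        intro κ hκ
        exact (Finset.add_sum_erase _ _ (mem_upF.mpr (mem_downF.mp hκ))).symm
      rw [Finset.sum_congr rfl this, Finset.sum_add_distrib, Finset.sum_const, smul_eq_mul]
    -- put everything together
    rw [h1, Finset.sum_add_distrib, Finset.sum_const, smul_eq_mul, hcross]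
    have hcard := card_upF μ
    have hcardD := card_downF μ
    have hx : (remNodes μ).card * tabCount μ
        + ∑ κ ∈ downF μ, ∑ ν ∈ (upF κ).erase μ, tabCount ν = size μ * m * tabCount μ := by
      have h5 := hB2.symm.trans hB
      rwa [hcardD] at h5
    rw [hcard]
    calc ((remNodes μ).card + m) * tabCount μ
          + ∑ κ ∈ downF μ, ∑ ν ∈ (upF κ).erase μ, tabCount ν
        = ((remNodes μ).card * tabCount μ
          + ∑ κ ∈ downF μ, ∑ ν ∈ (upF κ).erase μ, tabCount ν) + m * tabCount μ := by ring
      _ = size μ * m * tabCount μ + m * tabCount μ := by rw [hx]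
      _ = (size μ + 1) * m * tabCount μ := by ring

/-- Finiteness of the set of shapes with a given size. -/
theorem cell_bound {ν : YoungDiagram} {c : ℕ × ℕ} (h : c ∈ ν) :
    c.1 < ν.card ∧ c.2 < ν.card := by
  have h1 : c.1 < ν.colLen c.2 := by
    rw [← mem_iff_lt_colLen]
    exact ν.up_left_mem (le_refl _) (le_refl _) h
  have h2 : c.2 < ν.rowLen c.1 := mem_iff'.mp h
  have h3 : ν.colLen c.2 ≤ ν.card := by
    rw [colLen_eq_card]
    exact Finset.card_le_card (by rw [col]; exact Finset.filter_subset _ _)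
  have h4 : ν.rowLen c.1 ≤ ν.card := by
    rw [rowLen_eq_card]
    exact Finset.card_le_card (by rw [row]; exact Finset.filter_subset _ _)
  omega

theorem finite_size_eq (m n : ℕ) : {μ : Shape m | size μ = n}.Finite := by
  rw [← Set.finite_coe_iff]
  have hbound : ∀ μ : {μ : Shape m | size μ = n}, ∀ k : Fin m,
      (μ.val k).cells ∈ (Finset.range n ×ˢ Finset.range n).powerset := by
    intro μ k
    rw [Finset.mem_powerset]
    intro c hc
    have h1 := cell_bound ((mem_cells _).mp hc)
    have h2 : (μ.val k).card ≤ n := by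
      have hμ2 : size μ.val = n := μ.2
      have h3 : (μ.val k).card ≤ size μ.val :=
        Finset.single_le_sum (f := fun k => (μ.val k).card) (fun _ _ => Nat.zero_le _)
          (Finset.mem_univ k)
      omega
    rw [Finset.mem_product, Finset.mem_range, Finset.mem_range]
    omega
  have hf : Function.Injective
      (fun (μ : {μ : Shape m | size μ = n}) (k : Fin m) =>
        (⟨(μ.val k).cells, hbound μ k⟩ :
          {t // t ∈ (Finset.range n ×ˢ Finset.range n).powerset})) := by
    intro μ ν h
    apply Subtype.ext
    funext k
    exact yd_ext (congrArg Subtype.val (congrFun h k))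
  exact Finite.of_injective _ hf

/-- The finset of shapes of a given size. -/
def shapesF (m n : ℕ) : Finset (Shape m) := (finite_size_eq m n).toFinset

theorem mem_shapesF {n : ℕ} {μ : Shape m} : μ ∈ shapesF m n ↔ size μ = n :=
  Set.Finite.mem_toFinset _

theorem mem_shapesF' {n : ℕ} {μ : Fin m → YoungDiagram} :
    μ ∈ shapesF m n ↔ ∑ k, (μ k).card = n := mem_shapesF

/-- The empty shape. -/
def botS (m : ℕ) : Shape m := fun _ => ⊥

theorem size_botS : size (botS m) = 0 := by
  unfold size botS
  simp [YoungDiagram.card]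

theorem shapesF_zero : shapesF m 0 = {botS m} := by
  ext μ
  rw [mem_shapesF, Finset.mem_singleton]
  constructor
  · intro h
    funext k
    have hle : (μ k).card ≤ size μ := Finset.single_le_sum (f := fun k => (μ k).card)
      (fun _ _ => Nat.zero_le _) (Finset.mem_univ k)
    have hcz : (μ k).card = 0 := by omega
    rw [Finset.card_eq_zero] at hcz
    exact yd_ext (by simp [hcz, botS])
  · rintro rfl
    exact size_botS

theorem tabCount_botS : tabCount (botS m) = 1 := by
  rw [tabCount, size_botS, card_stdTab_zero]

/-- The main counting identity. -/
theorem main_sum (m : ℕ) : ∀ n : ℕ,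
    ∑ μ ∈ shapesF m n, tabCount μ ^ 2 = n.factorial * m ^ n := by
  intro n
  induction n with
  | zero => simp [shapesF_zero, tabCount_botS]
  | succ n IH =>
    have h1 : ∀ μ ∈ shapesF m (n + 1), tabCount μ ^ 2
        = ∑ κ ∈ downF μ, tabCount μ * tabCount κ := by
      intro μ hμ
      have hs : size μ ≠ 0 := by rw [mem_shapesF] at hμ; omega
      calc tabCount μ ^ 2 = tabCount μ * tabCount μ := pow_two _
        _ = tabCount μ * ∑ κ ∈ downF μ, tabCount κ := by rw [← tabCount_downF hs]
        _ = ∑ κ ∈ downF μ, tabCount μ * tabCount κ := by rw [Finset.mul_sum]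
    rw [Finset.sum_congr rfl h1]
    have hcomm : ∑ μ ∈ shapesF m (n + 1), ∑ κ ∈ downF μ, tabCount μ * tabCount κ
        = ∑ κ ∈ shapesF m n, ∑ μ ∈ upF κ, tabCount μ * tabCount κ := by
      apply Finset.sum_comm'
      intro μ κ
      rw [mem_shapesF, mem_shapesF, mem_upF, mem_downF]
      constructor
      · rintro ⟨h1, h2⟩
        exact ⟨h2, by have := h2.2; omega⟩
      · rintro ⟨h1, h2⟩
        exact ⟨by have := h1.2; omega, h1⟩
    rw [hcomm]
    have h2 : ∀ κ ∈ shapesF m n, ∑ μ ∈ upF κ, tabCount μ * tabCount κ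
        = (n + 1) * m * tabCount κ ^ 2 := by
      intro κ hκ
      rw [mem_shapesF] at hκ
      rw [← Finset.sum_mul, key_identity (size κ) κ rfl, hκ]
      ring
    rw [Finset.sum_congr rfl h2, ← Finset.mul_sum, IH, Nat.factorial_succ]
    ring

/-- Lemma B.1.  For all `m ≥ 1` and `n ≥ 0`, the sum over all
`m`-partitions `μ` of `n` of the square of the number of standard `m`-tableaux of
shape `μ` equals `n!·mⁿ`.  (The index type — the `m`-partitions of `n` — is finite,
so the finite sum `∑ᶠ` is the ordinary sum.) -/
theorem sum_squares_standard_m_tableaux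
    (m : ℕ) (hm : 1 ≤ m) (n : ℕ) :
    (∑ᶠ μ : { μ : Fin m → YoungDiagram // ∑ k, (μ k).card = n },
        (Nat.card (StdTab m n μ.val)) ^ 2) = n.factorial * m ^ n := by
  haveI hfin : Finite { μ : Fin m → YoungDiagram // ∑ k, (μ k).card = n } :=
    (finite_size_eq m n).to_subtype
  haveI := Fintype.ofFinite { μ : Fin m → YoungDiagram // ∑ k, (μ k).card = n }
  rw [finsum_eq_sum_of_fintype]
  calc ∑ μ : { μ : Fin m → YoungDiagram // ∑ k, (μ k).card = n },
        (Nat.card (StdTab m n μ.val)) ^ 2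
      = ∑ μ ∈ shapesF m n, (Nat.card (StdTab m n μ)) ^ 2 :=
        (Finset.sum_subtype (shapesF m n) (fun μ => mem_shapesF')
          (fun μ => (Nat.card (StdTab m n μ)) ^ 2)).symm
    _ = ∑ μ ∈ shapesF m n, tabCount μ ^ 2 := by
        apply Finset.sum_congr rfl
        intro μ hμ
        unfold tabCount
        rw [mem_shapesF.mp hμ]
    _ = n.factorial * m ^ n := main_sum m n

end CHA
end
end
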